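/- arXiv:1307.1043 — 5 statements merged into one kernel-verified Lean document; each statement's English description precedes it below -/
import Mathlib

section
/- Let I = [a,b] be a compact interval, ψ : I × U → ℝ a continuous family of C^2 functionals, and set f(λ,h) := ∇ψ_λ(h); assume f(λ,0) = 0 for all λ ∈ I. Let H = X ⊕ Y be an orthogonal splitting with dim X < ∞, write h = (x,y) and f(λ,h) = (f_1(λ,x,y), f_2(λ,x,y)) for the components of f along X and Y, and assume that the partial differential D_y f_2(λ,0,0) : Y → Y is invertible for every λ ∈ I. Then there exist δ > 0, the open ball B := {x ∈ X : ‖x‖ < δ}, and a continuous map g : I × B → Y such that (x, g(λ,x)) ∈ U and f_2(λ, x, g(λ,x)) = 0 for all (λ,x) ∈ I × B, g(λ,0) = 0 for all λ ∈ I, each g_λ := g(λ,·) is C^1 on B, and the map (λ,x) ↦ D g_λ(x) is continuous on I × B. -/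
open Set Metric Filter ContinuousLinearMap

/-- Uniform smallness on a compact parameter interval. -/
lemma LS.unif_small {P F' : Type*} [NormedAddCommGroup P] [NormedAddCommGroup F']
    {a b : ℝ} {W : Set P} (hW : IsOpen W) (hW0 : (0 : P) ∈ W)
    {φ : ℝ × P → F'} (hφ : ContinuousOn φ (Icc a b ×ˢ W))
    (h0 : ∀ l ∈ Icc a b, φ (l, 0) = 0) {η : ℝ} (hη : 0 < η) :
    ∃ r > 0, ball (0 : P) r ⊆ W ∧
      ∀ l ∈ Icc a b, ∀ p ∈ ball (0 : P) r, ‖φ (l, p)‖ < η := by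
  obtain ⟨r₀, hr₀, hr₀W⟩ := Metric.isOpen_iff.1 hW 0 hW0
  have key : ∀ l ∈ Icc a b, ∃ ρ > 0,
      ∀ q : ℝ × P, q ∈ ball ((l, 0) : ℝ × P) ρ → q ∈ Icc a b ×ˢ W → ‖φ q‖ < η := by
    intro l hl
    have hmem : ((l, 0) : ℝ × P) ∈ Icc a b ×ˢ W := ⟨hl, hW0⟩
    have hval : Tendsto φ (nhdsWithin ((l, 0) : ℝ × P) (Icc a b ×ˢ W)) (nhds 0) := by
      have := (hφ _ hmem).tendsto
      rwa [h0 l hl] at this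
    have hsmall : {q : ℝ × P | ‖φ q‖ < η} ∈
        nhdsWithin ((l, 0) : ℝ × P) (Icc a b ×ˢ W) := by
      have hb : {z : F' | ‖z‖ < η} ∈ nhds (0 : F') := by
        have := Metric.ball_mem_nhds (0 : F') hη
        simpa [Metric.ball, dist_zero_right] using this
      exact hval hb
    rw [mem_nhdsWithin] at hsmall
    obtain ⟨O, hOopen, hOl, hOsub⟩ := hsmall
    obtain ⟨ρ, hρ, hρsub⟩ := Metric.isOpen_iff.1 hOopen _ hOl
    exact ⟨ρ, hρ, fun q hq hq' => hOsub ⟨hρsub hq, hq'⟩⟩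
  choose! ρ hρpos hρ using key
  by_cases hab : a ≤ b
  case neg =>
    exact ⟨r₀, hr₀, hr₀W, fun l hl => absurd (hl.1.trans hl.2) hab⟩
  have hcov : Icc a b ⊆ ⋃ i : Icc a b, ball (i : ℝ) (ρ i) := by
    intro l hl
    exact mem_iUnion.2 ⟨⟨l, hl⟩, mem_ball_self (hρpos l hl)⟩
  obtain ⟨t, htcov⟩ := isCompact_Icc.elim_finite_subcover
    (fun i : Icc a b => ball (i : ℝ) (ρ i)) (fun i => isOpen_ball) hcov
  have htne : t.Nonempty := by
    rcases mem_iUnion₂.1 (htcov (left_mem_Icc.2 hab)) with ⟨i, hit, _⟩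
    exact ⟨i, hit⟩
  set r : ℝ := min r₀ (t.inf' htne fun i => ρ i) with hr
  have hrpos : 0 < r := lt_min hr₀ (by
    rw [Finset.lt_inf'_iff]
    exact fun i hi => hρpos i i.2)
  have hrW : ball (0 : P) r ⊆ W := fun p hp =>
    hr₀W (mem_ball_zero_iff.2 ((mem_ball_zero_iff.1 hp).trans_le (min_le_left _ _)))
  refine ⟨r, hrpos, hrW, fun l hl p hp => ?_⟩
  rcases mem_iUnion₂.1 (htcov hl) with ⟨i, hit, hli⟩
  refine hρ i i.2 (l, p) ?_ ⟨hl, hrW hp⟩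
  rw [mem_ball, Prod.dist_eq]
  refine max_lt hli ?_
  have : dist p 0 < r := hp
  calc dist p (0 : P) < r := this
    _ ≤ ρ i := (min_le_right _ _).trans (Finset.inf'_le _ hit)

section ParamIFT

variable {E F : Type*} [NormedAddCommGroup E] [NormedSpace ℝ E]
  [NormedAddCommGroup F] [NormedSpace ℝ F] [CompleteSpace F]

set_option maxHeartbeats 1000000 in
/-- Parametric implicit function theorem over a compact interval, by the
uniform contraction principle. -/
theorem LS.param_ift (a b : ℝ) (hab : a ≤ b)
    (W : Set (E × F)) (hW : IsOpen W) (hW0 : (0 : E × F) ∈ W)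
    (Fm : ℝ → E × F → F) (DF : ℝ → E × F → E × F →L[ℝ] F)
    (hderiv : ∀ l ∈ Icc a b, ∀ p ∈ W, HasFDerivAt (Fm l) (DF l p) p)
    (hFcont : ContinuousOn (fun q : ℝ × (E × F) => Fm q.1 q.2) (Icc a b ×ˢ W))
    (hDFcont : ContinuousOn (fun q : ℝ × (E × F) => DF q.1 q.2) (Icc a b ×ˢ W))
    (hF0 : ∀ l ∈ Icc a b, Fm l 0 = 0)
    (hunit : ∀ l ∈ Icc a b, IsUnit ((DF l 0).comp (ContinuousLinearMap.inr ℝ E F))) :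
    ∃ δ > (0 : ℝ), ∃ g : ℝ → E → F,
      ContinuousOn (fun p : ℝ × E => g p.1 p.2) (Icc a b ×ˢ ball 0 δ) ∧
      (∀ l ∈ Icc a b, g l 0 = 0) ∧
      (∀ l ∈ Icc a b, ∀ x ∈ ball (0 : E) δ, ((x, g l x) : E × F) ∈ W ∧ Fm l (x, g l x) = 0) ∧
      (∀ l ∈ Icc a b, ContDiffOn ℝ 1 (g l) (ball 0 δ)) ∧
      ContinuousOn (fun p : ℝ × E => fderiv ℝ (g p.1) p.2) (Icc a b ×ˢ ball 0 δ) := by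
  classical
  set I := Icc a b with hI
  set A : ℝ → F →L[ℝ] F := fun l => (DF l 0).comp (ContinuousLinearMap.inr ℝ E F) with hA
  set Ainv : ℝ → F →L[ℝ] F := fun l => Ring.inverse (A l) with hAinv
  have hIA : ContinuousOn A I := by
    have h1 : ContinuousOn (fun l : ℝ => DF l 0) I := by
      have : ContinuousOn ((fun q : ℝ × (E × F) => DF q.1 q.2) ∘ fun l : ℝ => (l, (0 : E × F))) I :=
        hDFcont.comp (Continuous.continuousOn (continuous_id.prodMk continuous_const)) (fun l hl => ⟨hl, hW0⟩)
      exact this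
    exact h1.clm_comp continuousOn_const
  have hIAinv : ContinuousOn Ainv I := by
    intro l hl
    have hu := (hunit l hl)
    have hc : ContinuousAt Ring.inverse (A l) := by
      have := NormedRing.inverse_continuousAt hu.unit
      rwa [hu.unit_spec] at this
    exact hc.comp_continuousWithinAt (hIA l hl)
  -- bounds on compact sets
  obtain ⟨C0, hC0⟩ := isCompact_Icc.exists_bound_of_continuousOn hIAinv
  obtain ⟨C1, hC1⟩ := isCompact_Icc.exists_bound_of_continuousOn
    (show ContinuousOn (fun l : ℝ => DF l 0) I from
      hDFcont.comp (Continuous.continuousOn (continuous_id.prodMk continuous_const)) (fun l hl => ⟨hl, hW0⟩))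
  have hC0nn : 0 ≤ C0 := le_trans (norm_nonneg _) (hC0 a (left_mem_Icc.2 hab))
  have hC1nn : 0 ≤ C1 := le_trans (norm_nonneg _) (hC1 a (left_mem_Icc.2 hab))
  set CD : ℝ := C1 + 1 with hCD
  have hCDpos : 0 < CD := by positivity
  -- the `y`-partial of the fixed point map
  set N : ℝ × (E × F) → F →L[ℝ] F := fun q =>
    1 - Ainv q.1 * ((DF q.1 q.2).comp (ContinuousLinearMap.inr ℝ E F)) with hN
  have hNcont : ContinuousOn N (I ×ˢ W) := by
    apply continuousOn_const.sub
    apply ContinuousOn.mul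
    · exact hIAinv.comp continuous_fst.continuousOn (fun q hq => hq.1)
    · exact hDFcont.clm_comp continuousOn_const
  have hN0 : ∀ l ∈ I, N (l, 0) = 0 := by
    intro l hl
    simp only [hN]
    rw [show Ainv l * ((DF l 0).comp (ContinuousLinearMap.inr ℝ E F)) = Ainv l * A l from rfl,
      Ring.inverse_mul_cancel _ (hunit l hl), sub_self]
  -- radius `r₁`: smallness of `N`
  obtain ⟨r₁, hr₁pos, hr₁W, hr₁⟩ := LS.unif_small hW hW0 hNcont hN0 (by norm_num : (0:ℝ) < 1/2)
  -- radius `r₂`: `‖DF l p - DF l 0‖ < 1`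
  obtain ⟨r₂, hr₂pos, hr₂W, hr₂⟩ := LS.unif_small hW hW0
    (show ContinuousOn (fun q : ℝ × (E × F) => DF q.1 q.2 - DF q.1 0) (I ×ˢ W) from
      hDFcont.sub (hDFcont.comp
        (continuous_fst.prodMk continuous_const).continuousOn (fun q hq => ⟨hq.1, hW0⟩)))
    (fun l hl => sub_self _) (by norm_num : (0:ℝ) < 1)
  set r : ℝ := min r₁ r₂ with hrdef
  have hrpos : 0 < r := lt_min hr₁pos hr₂pos
  have hrW : ball (0 : E × F) r ⊆ W := fun p hp =>
    hr₁W (mem_ball_zero_iff.2 ((mem_ball_zero_iff.1 hp).trans_le (min_le_left _ _)))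
  have hrN : ∀ l ∈ I, ∀ p ∈ ball (0 : E × F) r, ‖N (l, p)‖ < 1/2 := fun l hl p hp =>
    hr₁ l hl p (mem_ball_zero_iff.2 ((mem_ball_zero_iff.1 hp).trans_le (min_le_left _ _)))
  have hrDF : ∀ l ∈ I, ∀ p ∈ ball (0 : E × F) r, ‖DF l p‖ ≤ CD := by
    intro l hl p hp
    have h1 : ‖DF l p - DF l 0‖ < 1 :=
      hr₂ l hl p (mem_ball_zero_iff.2 ((mem_ball_zero_iff.1 hp).trans_le (min_le_right _ _)))
    calc ‖DF l p‖ ≤ ‖DF l p - DF l 0‖ + ‖DF l 0‖ := by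
          simpa using norm_add_le (DF l p - DF l 0) (DF l 0)
      _ ≤ 1 + C1 := add_le_add h1.le (hC1 l hl)
      _ = CD := by rw [hCD]; ring
  set ε : ℝ := r / 2 with hε
  have hεpos : 0 < ε := by positivity
  -- radius `r₃`: smallness of `x ↦ Ainv l (Fm l (x, 0))`
  have hW'open : IsOpen {x : E | ((x, 0) : E × F) ∈ W} :=
    hW.preimage (continuous_id.prodMk continuous_const)
  obtain ⟨r₃, hr₃pos, hr₃W, hr₃⟩ := LS.unif_small (F' := F) hW'open (by exact hW0)
    (show ContinuousOn (fun q : ℝ × E => Ainv q.1 (Fm q.1 (q.2, 0)))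
        (I ×ˢ {x : E | ((x, 0) : E × F) ∈ W}) from by
      apply ContinuousOn.clm_apply
      · exact hIAinv.comp continuous_fst.continuousOn (fun q hq => hq.1)
      · exact hFcont.comp
          ((continuous_fst.prodMk ((continuous_snd.prodMk continuous_const))).continuousOn)
          (fun q hq => ⟨hq.1, hq.2⟩))
    (by
      intro l hl
      have : ((0 : E), (0 : F)) = (0 : E × F) := rfl
      rw [this, hF0 l hl, map_zero])
    (by positivity : (0:ℝ) < ε/4)
  set δ : ℝ := min r₃ ε with hδdef
  have hδpos : 0 < δ := lt_min hr₃pos hεpos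
  have hδε : δ ≤ ε := min_le_right _ _
  have hεr : ε < r := by rw [hε]; linarith
  -- membership facts
  have hmem_r : ∀ x : E, ∀ y : F, ‖x‖ < δ → ‖y‖ ≤ ε → ((x, y) : E × F) ∈ ball (0 : E × F) r := by
    intro x y hx hy
    rw [mem_ball_zero_iff, Prod.norm_def]
    exact max_lt (lt_of_lt_of_le hx (hδε.trans hεr.le)) (lt_of_le_of_lt hy hεr)
  -- the fixed point map
  set Φ : ℝ → E → F → F := fun l x y => y - Ainv l (Fm l (x, y)) with hΦ
  -- derivative of `Φ l x ·`
  have hΦderiv : ∀ l ∈ I, ∀ x : E, ∀ y : F, ((x, y) : E × F) ∈ ball (0 : E × F) r →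
      HasFDerivAt (Φ l x) (N (l, (x, y))) y := by
    intro l hl x y hxy
    have h1 : HasFDerivAt (fun y : F => ((x, y) : E × F))
        (ContinuousLinearMap.inr ℝ E F) y := hasFDerivAt_prodMk_right x y
    have h2 : HasFDerivAt (fun y : F => Fm l (x, y))
        ((DF l (x, y)).comp (ContinuousLinearMap.inr ℝ E F)) y :=
      (hderiv l hl (x, y) (hrW hxy)).comp y h1
    have h3 : HasFDerivAt (fun y : F => Ainv l (Fm l (x, y)))
        ((Ainv l).comp ((DF l (x, y)).comp (ContinuousLinearMap.inr ℝ E F))) y :=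
      (Ainv l).hasFDerivAt.comp y h2
    have h4 := (hasFDerivAt_id y).sub h3
    exact h4
  -- contraction estimate
  have hcontr : ∀ l ∈ I, ∀ x : E, ‖x‖ < δ → ∀ y ∈ closedBall (0 : F) ε,
      ∀ y' ∈ closedBall (0 : F) ε, ‖Φ l x y - Φ l x y'‖ ≤ 1/2 * ‖y - y'‖ := by
    intro l hl x hx y hy y' hy'
    refine (convex_closedBall (0 : F) ε).norm_image_sub_le_of_norm_hasFDerivWithin_le
      (f := Φ l x) (f' := fun y => N (l, (x, y))) ?_ ?_ hy' hy
    · intro z hz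
      exact (hΦderiv l hl x z (hmem_r x z hx (mem_closedBall_zero_iff.1 hz))).hasFDerivWithinAt
    · intro z hz
      exact (hrN l hl (x, z) (hmem_r x z hx (mem_closedBall_zero_iff.1 hz))).le
  -- smallness of `Φ l x 0`
  have hΦ0 : ∀ l ∈ I, ∀ x : E, ‖x‖ < δ → ‖Φ l x 0‖ < ε/4 := by
    intro l hl x hx
    have hxW : ((x, 0) : E × F) ∈ W := hrW (hmem_r x 0 hx (by simp [hεpos.le]))
    have := hr₃ l hl x (mem_ball_zero_iff.2 (lt_of_lt_of_le hx (min_le_left _ _)))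
    simpa [hΦ] using this
  -- `Φ l x` maps the closed ball into itself
  have hmaps : ∀ l ∈ I, ∀ x : E, ‖x‖ < δ → ∀ y ∈ closedBall (0 : F) ε,
      Φ l x y ∈ closedBall (0 : F) ε := by
    intro l hl x hx y hy
    rw [mem_closedBall_zero_iff]
    have h1 : ‖Φ l x y - Φ l x 0‖ ≤ 1/2 * ‖y - 0‖ :=
      hcontr l hl x hx y hy 0 (by simp [hεpos.le])
    have h2 := hΦ0 l hl x hx
    have hyε : ‖y‖ ≤ ε := mem_closedBall_zero_iff.1 hy
    calc ‖Φ l x y‖ ≤ ‖Φ l x y - Φ l x 0‖ + ‖Φ l x 0‖ := by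
          simpa using norm_add_le (Φ l x y - Φ l x 0) (Φ l x 0)
      _ ≤ 1/2 * ‖y‖ + ε/4 := by rw [sub_zero] at h1; linarith
      _ ≤ ε := by linarith
  -- fixed points are exactly zeros of `Fm`
  have hfixiff : ∀ l ∈ I, ∀ x : E, ∀ y : F, (Φ l x y = y ↔ Fm l (x, y) = 0) := by
    intro l hl x y
    constructor
    · intro h
      have h0 : Ainv l (Fm l (x, y)) = 0 := by
        have h' : y - Ainv l (Fm l (x, y)) = y := h
        have := sub_eq_self.1 h'
        exact this
      have : (A l) (Ainv l (Fm l (x, y))) = Fm l (x, y) := by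
        rw [show (A l) (Ainv l (Fm l (x, y))) = ((A l) * (Ainv l)) (Fm l (x, y)) from rfl,
          Ring.mul_inverse_cancel _ (hunit l hl), ContinuousLinearMap.one_apply]
      rw [← this, h0, map_zero]
    · intro h
      simp [hΦ, h]
  -- existence of fixed points via the Banach fixed point theorem
  have hfix : ∀ l ∈ I, ∀ x : E, ‖x‖ < δ → ∃ y, y ∈ closedBall (0 : F) ε ∧ Fm l (x, y) = 0 := by
    intro l hl x hx
    set s := closedBall (0 : F) ε with hs
    haveI : Nonempty s := ⟨⟨0, mem_closedBall_self hεpos.le⟩⟩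
    haveI : CompleteSpace s := IsClosed.completeSpace_coe (hs := isClosed_closedBall)
    set T : s → s := fun y => ⟨Φ l x y.1, hmaps l hl x hx y.1 y.2⟩ with hT
    have hTc : ContractingWith (1/2 : NNReal) T := by
      constructor
      · rw [← NNReal.coe_lt_one]; norm_num
      · apply LipschitzWith.of_dist_le_mul
        intro y y'
        have h := hcontr l hl x hx y.1 y.2 y'.1 y'.2
        rw [Subtype.dist_eq, Subtype.dist_eq, dist_eq_norm, dist_eq_norm]
        have hc : ((1/2 : NNReal) : ℝ) = 1/2 := by norm_num
        rw [hc]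
        exact h
    set y₀ := hTc.fixedPoint T with hy₀
    refine ⟨y₀.1, y₀.2, ?_⟩
    rw [← hfixiff l hl x _]
    have hfp : T y₀ = y₀ := hTc.fixedPoint_isFixedPt
    calc Φ l x y₀.1 = (T y₀).1 := rfl
      _ = y₀.1 := by rw [hfp]
  -- uniqueness of fixed points in the closed ball
  have huniq : ∀ l ∈ I, ∀ x : E, ‖x‖ < δ → ∀ y ∈ closedBall (0 : F) ε,
      ∀ y' ∈ closedBall (0 : F) ε, Fm l (x, y) = 0 → Fm l (x, y') = 0 → y = y' := by
    intro l hl x hx y hy y' hy' h h'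
    have e1 : Φ l x y = y := (hfixiff l hl x y).2 h
    have e2 : Φ l x y' = y' := (hfixiff l hl x y').2 h'
    have := hcontr l hl x hx y hy y' hy'
    rw [e1, e2] at this
    have hn : ‖y - y'‖ ≤ 0 := by linarith [norm_nonneg (y - y')]
    rw [← sub_eq_zero]
    exact norm_le_zero_iff.1 hn
  -- the implicit function
  set g : ℝ → E → F := fun l x =>
    if h : l ∈ I ∧ x ∈ ball (0 : E) δ then (hfix l h.1 x (mem_ball_zero_iff.1 h.2)).choose
    else 0 with hg
  have hgspec : ∀ l ∈ I, ∀ x ∈ ball (0 : E) δ,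
      g l x ∈ closedBall (0 : F) ε ∧ Fm l (x, g l x) = 0 := by
    intro l hl x hx
    rw [hg]
    simp only [dif_pos (⟨hl, hx⟩ : l ∈ I ∧ x ∈ ball (0 : E) δ)]
    exact (hfix l hl x (mem_ball_zero_iff.1 hx)).choose_spec
  -- a solution is at most `ε/2` in norm
  have hghalf : ∀ l ∈ I, ∀ x ∈ ball (0 : E) δ, ‖g l x‖ ≤ ε/2 := by
    intro l hl x hx
    obtain ⟨hmem, hzero⟩ := hgspec l hl x hx
    have e1 : Φ l x (g l x) = g l x := (hfixiff l hl x _).2 hzero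
    have h1 : ‖Φ l x (g l x) - Φ l x 0‖ ≤ 1/2 * ‖g l x - 0‖ :=
      hcontr l hl x (mem_ball_zero_iff.1 hx) (g l x) hmem 0 (by simp [hεpos.le])
    have h2 := hΦ0 l hl x (mem_ball_zero_iff.1 hx)
    have : ‖g l x‖ ≤ ‖Φ l x (g l x) - Φ l x 0‖ + ‖Φ l x 0‖ := by
      conv_lhs => rw [← e1]
      simpa using norm_add_le (Φ l x (g l x) - Φ l x 0) (Φ l x 0)
    rw [sub_zero] at h1
    linarith
  have hg0 : ∀ l ∈ I, g l 0 = 0 := by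
    intro l hl
    have h0δ : (0 : E) ∈ ball (0 : E) δ := mem_ball_self hδpos
    obtain ⟨hmem, hzero⟩ := hgspec l hl 0 h0δ
    refine huniq l hl 0 (by simpa using hδpos) _ hmem 0 (by simp [hεpos.le]) hzero ?_
    have : ((0 : E), (0 : F)) = (0 : E × F) := rfl
    rw [this, hF0 l hl]
  have hgW : ∀ l ∈ I, ∀ x ∈ ball (0 : E) δ, ((x, g l x) : E × F) ∈ ball (0 : E × F) r := by
    intro l hl x hx
    exact hmem_r x (g l x) (mem_ball_zero_iff.1 hx)
      (le_trans (hghalf l hl x hx) (by linarith))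
  -- Lipschitz estimate for `Fm` in the `x`-variable
  have hFx_lip : ∀ l ∈ I, ∀ p ∈ ball (0 : E × F) r, ∀ p' ∈ ball (0 : E × F) r,
      ‖Fm l p - Fm l p'‖ ≤ CD * ‖p - p'‖ := by
    intro l hl p hp p' hp'
    refine (convex_ball (0 : E × F) r).norm_image_sub_le_of_norm_hasFDerivWithin_le
      (f := Fm l) (f' := DF l) ?_ ?_ hp' hp
    · exact fun z hz => (hderiv l hl z (hrW hz)).hasFDerivWithinAt
    · exact fun z hz => hrDF l hl z hz
  -- Lipschitz estimate for `g` in `x`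
  set K : ℝ := 2 * C0 * CD with hK
  have hKnn : 0 ≤ K := by positivity
  have hg_lip : ∀ l ∈ I, ∀ x ∈ ball (0 : E) δ, ∀ x' ∈ ball (0 : E) δ,
      ‖g l x - g l x'‖ ≤ K * ‖x - x'‖ := by
    intro l hl x hx x' hx'
    obtain ⟨hm, hz⟩ := hgspec l hl x hx
    obtain ⟨hm', hz'⟩ := hgspec l hl x' hx'
    have e1 : Φ l x (g l x) = g l x := (hfixiff l hl x _).2 hz
    have e2 : Φ l x' (g l x') = g l x' := (hfixiff l hl x' _).2 hz'
    have h1 : ‖Φ l x (g l x) - Φ l x (g l x')‖ ≤ 1/2 * ‖g l x - g l x'‖ :=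
      hcontr l hl x (mem_ball_zero_iff.1 hx) _ hm _ hm'
    have h2 : ‖Φ l x (g l x') - Φ l x' (g l x')‖ ≤ C0 * (CD * ‖x - x'‖) := by
      have hdiff : Φ l x (g l x') - Φ l x' (g l x')
          = Ainv l (Fm l (x', g l x') - Fm l (x, g l x')) := by
        simp only [hΦ, map_sub]
        abel
      rw [hdiff]
      have hb1 : ‖Ainv l (Fm l (x', g l x') - Fm l (x, g l x'))‖
          ≤ ‖Ainv l‖ * ‖Fm l (x', g l x') - Fm l (x, g l x')‖ := (Ainv l).le_opNorm _
      have hb2 : ‖Fm l (x', g l x') - Fm l (x, g l x')‖ ≤ CD * ‖x - x'‖ := by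
        have := hFx_lip l hl (x', g l x') (hgW l hl x' hx') (x, g l x')
          (hmem_r x (g l x') (mem_ball_zero_iff.1 hx) (le_trans (hghalf l hl x' hx') (by linarith)))
        have hnorm : ‖((x', g l x') : E × F) - (x, g l x')‖ = ‖x' - x‖ := by
          rw [Prod.mk_sub_mk, sub_self, Prod.norm_def]
          simp [max_eq_left (norm_nonneg _)]
        rw [hnorm] at this
        rwa [norm_sub_rev x x']
      calc ‖Ainv l (Fm l (x', g l x') - Fm l (x, g l x'))‖
          ≤ ‖Ainv l‖ * ‖Fm l (x', g l x') - Fm l (x, g l x')‖ := hb1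
        _ ≤ C0 * (CD * ‖x - x'‖) := by
            apply mul_le_mul (hC0 l hl) hb2 (norm_nonneg _) hC0nn
    have h3 : ‖g l x - g l x'‖ ≤ ‖Φ l x (g l x) - Φ l x (g l x')‖
        + ‖Φ l x (g l x') - Φ l x' (g l x')‖ := by
      conv_lhs => rw [← e1, ← e2]
      simpa using norm_add_le (Φ l x (g l x) - Φ l x (g l x'))
        (Φ l x (g l x') - Φ l x' (g l x'))
    rw [hK]
    nlinarith [norm_nonneg (g l x - g l x'), norm_nonneg (x - x')]
  -- joint continuity of `g`
  set D : Set (ℝ × E) := I ×ˢ ball (0 : E) δ with hD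
  have hgcont : ContinuousOn (fun q : ℝ × E => g q.1 q.2) D := by
    intro q₀ hq₀
    obtain ⟨hl₀, hx₀⟩ := hq₀
    set y₀ := g q₀.1 q₀.2 with hy₀
    obtain ⟨hm₀, hz₀⟩ := hgspec q₀.1 hl₀ q₀.2 hx₀
    -- the comparison function
    set ρ : ℝ × E → F := fun q => Φ q.1 q.2 y₀ - y₀ with hρ
    have hρcont : ContinuousWithinAt ρ D q₀ := by
      have h1 : ContinuousOn (fun q : ℝ × E => Ainv q.1 (Fm q.1 (q.2, y₀))) D := by
        apply ContinuousOn.clm_apply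
        · exact hIAinv.comp continuous_fst.continuousOn (fun q hq => hq.1)
        · refine hFcont.comp
            ((continuous_fst.prodMk ((continuous_snd.prodMk continuous_const))).continuousOn) ?_
          intro q hq
          refine ⟨hq.1, hrW ?_⟩
          exact hmem_r q.2 y₀ (mem_ball_zero_iff.1 hq.2)
            (le_trans (mem_closedBall_zero_iff.1 hm₀) le_rfl)
      have : ContinuousOn ρ D := by
        apply ContinuousOn.sub _ continuousOn_const
        exact continuousOn_const.sub h1
      exact this q₀ ⟨hl₀, hx₀⟩
    have hρ0 : ρ q₀ = 0 := by
      rw [hρ]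
      simp only
      rw [(hfixiff q₀.1 hl₀ q₀.2 y₀).2 hz₀, sub_self]
    -- the squeeze
    have hest : ∀ q ∈ D, ‖g q.1 q.2 - y₀‖ ≤ 2 * ‖ρ q‖ := by
      rintro ⟨l, x⟩ ⟨hl, hx⟩
      obtain ⟨hm, hz⟩ := hgspec l hl x hx
      have e1 : Φ l x (g l x) = g l x := (hfixiff l hl x _).2 hz
      have h1 : ‖Φ l x (g l x) - Φ l x y₀‖ ≤ 1/2 * ‖g l x - y₀‖ :=
        hcontr l hl x (mem_ball_zero_iff.1 hx) _ hm _ hm₀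
    
      have h3 : ‖g l x - y₀‖ ≤ ‖Φ l x (g l x) - Φ l x y₀‖ + ‖Φ l x y₀ - y₀‖ := by
        conv_lhs => rw [← e1]
        simpa using norm_add_le (Φ l x (g l x) - Φ l x y₀) (Φ l x y₀ - y₀)
      have h4 : ‖ρ (l, x)‖ = ‖Φ l x y₀ - y₀‖ := rfl
      rw [h4]
      linarith
    rw [ContinuousWithinAt, tendsto_iff_norm_sub_tendsto_zero]
    have hub : Tendsto (fun q : ℝ × E => 2 * ‖ρ q‖) (nhdsWithin q₀ D) (nhds 0) := by
      have h5 : Tendsto ρ (nhdsWithin q₀ D) (nhds 0) := by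
        have := hρcont.tendsto
        rwa [hρ0] at this
      have := (h5.norm).const_mul (2 : ℝ)
      simpa using this
    apply squeeze_zero' (g := fun q : ℝ × E => 2 * ‖ρ q‖)
    · exact Eventually.of_forall (fun q => norm_nonneg _)
    · filter_upwards [self_mem_nhdsWithin] with q hq
      exact hest q hq
    · exact hub
  -- invertibility of the partial `y`-derivative along the solution set
  have hDy_unit : ∀ q ∈ D, IsUnit ((DF q.1 (q.2, g q.1 q.2)).comp
      (ContinuousLinearMap.inr ℝ E F)) := by
    rintro ⟨l, x⟩ ⟨hl, hx⟩
    set p : E × F := (x, g l x) with hp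
    have hpr : p ∈ ball (0 : E × F) r := hgW l hl x hx
    set Dy := (DF l p).comp (ContinuousLinearMap.inr ℝ E F) with hDy
    have h1 : ‖N (l, p)‖ < 1 := lt_trans (hrN l hl p hpr) (by norm_num)
    have h2 : IsUnit (Ainv l * Dy) := by
      have := isUnit_one_sub_of_norm_lt_one h1
      rwa [hN, show (1 : F →L[ℝ] F) - (1 - Ainv l * ((DF l p).comp
        (ContinuousLinearMap.inr ℝ E F))) = Ainv l * Dy by abel] at this
    have h3 : Dy = A l * (Ainv l * Dy) := by
      rw [← mul_assoc, Ring.mul_inverse_cancel _ (hunit l hl), one_mul]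
    rw [h3]
    exact (hunit l hl).mul h2
  -- the candidate derivative of `g l ·`
  set T : ℝ × E → E →L[ℝ] F := fun q =>
    -((Ring.inverse ((DF q.1 (q.2, g q.1 q.2)).comp (ContinuousLinearMap.inr ℝ E F))).comp
      ((DF q.1 (q.2, g q.1 q.2)).comp (ContinuousLinearMap.inl ℝ E F))) with hT
  have hgderiv : ∀ q ∈ D, HasFDerivAt (g q.1) (T q) q.2 := by
    rintro ⟨l, x⟩ ⟨hl, hx⟩
    set y := g l x with hy
    set p : E × F := (x, y) with hp
    have hpr : p ∈ ball (0 : E × F) r := hgW l hl x hx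
    set Dy := (DF l p).comp (ContinuousLinearMap.inr ℝ E F) with hDy
    set Dx := (DF l p).comp (ContinuousLinearMap.inl ℝ E F) with hDx
    set Dyi := Ring.inverse Dy with hDyi
    have hDyu : IsUnit Dy := hDy_unit (l, x) ⟨hl, hx⟩
    -- continuity of the slice `g l ·` at `x`
    have hcx : ContinuousAt (g l) x := by
      have hsl : ContinuousOn (g l) (ball (0 : E) δ) := by
        intro z hz
        have := (hgcont (l, z) ⟨hl, hz⟩).comp
          (f := fun z : E => ((l, z) : ℝ × E)) (continuous_const.prodMk continuous_id).continuousWithinAt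
          (fun z hz => ⟨hl, hz⟩)
        exact this
      exact hsl.continuousAt (isOpen_ball.mem_nhds hx)
    set φ : E → E × F := fun x' => (x', g l x') with hφdef
    have hφt : Tendsto φ (nhds x) (nhds p) := (continuousAt_id.prodMk hcx).tendsto
    have h1 := (hderiv l hl p (hrW hpr)).isLittleO
    have h2 := h1.comp_tendsto hφt
    -- eventually the composition vanishes
    have hev : ∀ᶠ x' in nhds x, Fm l (φ x') = 0 := by
      filter_upwards [isOpen_ball.mem_nhds hx] with x' hx'
      exact (hgspec l hl x' hx').2
    have h3 : (fun x' => (DF l p) (φ x' - p)) =o[nhds x] fun x' => φ x' - p := by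
      have heq : (fun x' => Fm l (φ x') - Fm l p - (DF l p) (φ x' - p))
          =ᶠ[nhds x] fun x' => -((DF l p) (φ x' - p)) := by
        filter_upwards [hev] with x' hx'
        rw [hx', (hgspec l hl x hx).2, sub_zero, zero_sub]
      have h2' : (fun x' => Fm l (φ x') - Fm l p - (DF l p) (φ x' - p))
          =o[nhds x] fun x' => φ x' - p := h2
      have h2'' := h2'.congr' heq EventuallyEq.rfl
      simpa using h2''.neg_left
    -- `φ x' - p` is big-O of `x' - x`
    have h4 : (fun x' => φ x' - p) =O[nhds x] fun x' => x' - x := by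
      rw [Asymptotics.isBigO_iff]
      refine ⟨K + 1, ?_⟩
      filter_upwards [isOpen_ball.mem_nhds hx] with x' hx'
      have hsub : φ x' - p = (x' - x, g l x' - y) := rfl
      rw [hsub, Prod.norm_def]
      have hK1 : ‖x' - x‖ ≤ (K + 1) * ‖x' - x‖ := by nlinarith [norm_nonneg (x' - x)]
      have hK2 : ‖g l x' - y‖ ≤ (K + 1) * ‖x' - x‖ := by
        have := hg_lip l hl x' hx' x hx
        nlinarith [norm_nonneg (x' - x)]
      exact max_le hK1 hK2
    have h5 := h3.trans_isBigO h4
    have h6 : (fun x' => Dyi ((DF l p) (φ x' - p))) =o[nhds x] fun x' => x' - x :=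
      (Dyi.isBigO_comp _ _).trans_isLittleO h5
    -- algebraic identity
    have h7 : ∀ x', Dyi ((DF l p) (φ x' - p)) = g l x' - g l x - T (l, x) (x' - x) := by
      intro x'
      have hsplit : φ x' - p = ContinuousLinearMap.inl ℝ E F (x' - x)
          + ContinuousLinearMap.inr ℝ E F (g l x' - y) := by
        rw [ContinuousLinearMap.inl_apply, ContinuousLinearMap.inr_apply]
        have : φ x' - p = (x' - x, g l x' - y) := rfl
        rw [this, Prod.mk_add_mk, add_zero, zero_add]
      rw [hsplit, map_add, map_add]
      have e1 : Dyi ((DF l p) (ContinuousLinearMap.inr ℝ E F (g l x' - y)))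
          = g l x' - y := by
        rw [show (DF l p) (ContinuousLinearMap.inr ℝ E F (g l x' - y))
          = Dy (g l x' - y) from rfl]
        rw [show Dyi (Dy (g l x' - y)) = (Dyi * Dy) (g l x' - y) from rfl,
          Ring.inverse_mul_cancel _ hDyu, ContinuousLinearMap.one_apply]
      have e2 : Dyi ((DF l p) (ContinuousLinearMap.inl ℝ E F (x' - x)))
          = -(T (l, x) (x' - x)) := by
        rw [hT]
        simp only [ContinuousLinearMap.neg_apply, ContinuousLinearMap.comp_apply, neg_neg]
        rfl
      rw [e1, e2, ← hy]
      abel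
    have h8 : (fun x' => g l x' - g l x - T (l, x) (x' - x)) =o[nhds x] fun x' => x' - x := by
      refine h6.congr (fun x' => h7 x') (fun x' => rfl)
    exact HasFDerivAt.of_isLittleO h8
  -- continuity of the derivative candidate
  have hgq : ContinuousOn (fun q : ℝ × E => ((q.2, g q.1 q.2) : E × F)) D :=
    continuous_snd.continuousOn.prodMk hgcont
  have hDFq : ContinuousOn (fun q : ℝ × E => DF q.1 (q.2, g q.1 q.2)) D := by
    refine hDFcont.comp (continuous_fst.continuousOn.prodMk hgq) ?_
    rintro ⟨l, x⟩ ⟨hl, hx⟩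
    exact ⟨hl, hrW (hgW l hl x hx)⟩
  have hDyq : ContinuousOn (fun q : ℝ × E =>
      (DF q.1 (q.2, g q.1 q.2)).comp (ContinuousLinearMap.inr ℝ E F)) D :=
    hDFq.clm_comp continuousOn_const
  have hDxq : ContinuousOn (fun q : ℝ × E =>
      (DF q.1 (q.2, g q.1 q.2)).comp (ContinuousLinearMap.inl ℝ E F)) D :=
    hDFq.clm_comp continuousOn_const
  have hDyiq : ContinuousOn (fun q : ℝ × E =>
      Ring.inverse ((DF q.1 (q.2, g q.1 q.2)).comp (ContinuousLinearMap.inr ℝ E F))) D := by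
    intro q hq
    have hu := hDy_unit q hq
    have hc : ContinuousAt Ring.inverse
        ((DF q.1 (q.2, g q.1 q.2)).comp (ContinuousLinearMap.inr ℝ E F)) := by
      have := NormedRing.inverse_continuousAt hu.unit
      rwa [hu.unit_spec] at this
    exact ContinuousAt.comp_continuousWithinAt
      (f := fun q : ℝ × E => (DF q.1 (q.2, g q.1 q.2)).comp (ContinuousLinearMap.inr ℝ E F))
      hc (hDyq q hq)
  have hTcont : ContinuousOn T D := (hDyiq.clm_comp hDxq).neg
  have hfderiv_eq : ∀ q ∈ D, fderiv ℝ (g q.1) q.2 = T q := fun q hq => (hgderiv q hq).fderiv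
  -- `C¹` of the slices
  have hslice : ∀ l ∈ I, ContDiffOn ℝ 1 (g l) (ball 0 δ) := by
    intro l hl
    have h1 : (1 : WithTop ℕ∞) = 0 + 1 := by norm_num
    rw [h1, contDiffOn_succ_iff_fderiv_of_isOpen isOpen_ball]
    refine ⟨fun x hx => (hgderiv (l, x) ⟨hl, hx⟩).differentiableAt.differentiableWithinAt,
      by simp, ?_⟩
    rw [contDiffOn_zero]
    have : ContinuousOn (fun x : E => T (l, x)) (ball 0 δ) := by
      refine hTcont.comp (f := fun x : E => ((l, x) : ℝ × E))
        (continuous_const.prodMk continuous_id).continuousOn ?_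
      exact fun x hx => ⟨hl, hx⟩
    refine this.congr ?_
    intro x hx
    exact hfderiv_eq (l, x) ⟨hl, hx⟩
  -- conclusion
  refine ⟨δ, hδpos, g, hgcont, hg0, ?_, hslice, ?_⟩
  · intro l hl x hx
    exact ⟨hrW (hgW l hl x hx), (hgspec l hl x hx).2⟩
  · exact hTcont.congr hfderiv_eq









end ParamIFT

set_option maxHeartbeats 1000000 in

/-- **Lyapunov–Schmidt reduction, existence of the implicit map `g`.**
`ψ : I × U → ℝ` is a continuous family of `C²` functionals on a neighborhood `U` of `0` in a
separable real Hilbert space `H`, `f(λ,h) := ∇ψ_λ(h)` vanishes along the trivial branch,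
`H = X ⊕ Xᗮ` is an orthogonal splitting with `dim X < ∞`, and the partial differential
`D_y f₂(λ,0,0) : Xᗮ → Xᗮ` is invertible for every `λ ∈ I`.  Then there are `δ > 0`,
the ball `B = B(0,δ) ⊆ X` and a continuous map `g : I × B → Xᗮ` with `g(λ,0) = 0`,
`(x, g(λ,x)) ∈ U`, `f₂(λ, x, g(λ,x)) = 0`, each `g_λ` of class `C¹` on `B`, and
`(λ,x) ↦ D g_λ(x)` continuous on `I × B`. -/
theorem lyapunov_schmidt_existence
    {H : Type*} [NormedAddCommGroup H] [InnerProductSpace ℝ H] [CompleteSpace H]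
    [TopologicalSpace.SeparableSpace H]
    (U : Set H) (hUopen : IsOpen U) (hU0 : (0 : H) ∈ U)
    (a b : ℝ) (hab : a ≤ b)
    (ψ : ℝ → H → ℝ)
    -- `ψ` is a continuous family of `C²` functionals parametrized by `I = [a,b]`:
    (hψC2 : ∀ l ∈ Icc a b, ContDiffOn ℝ 2 (ψ l) U)
    (hψcont : ContinuousOn (fun p : ℝ × H => ψ p.1 p.2) (Icc a b ×ˢ U))
    (hψd1 : ContinuousOn (fun p : ℝ × H => fderiv ℝ (ψ p.1) p.2) (Icc a b ×ˢ U))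
    (hψd2 : ContinuousOn (fun p : ℝ × H => fderiv ℝ (fderiv ℝ (ψ p.1)) p.2) (Icc a b ×ˢ U))
    -- `f(λ, 0) = 0` for all `λ ∈ I`, where `f(λ,h) := ∇ψ_λ(h)`:
    (hcrit : ∀ l ∈ Icc a b, gradient (ψ l) 0 = 0)
    -- orthogonal splitting `H = X ⊕ Y` with `Y = Xᗮ` and `dim X < ∞`:
    (X : Submodule ℝ H) [FiniteDimensional ℝ X]
    -- `D_y f₂(λ,0,0) : Y → Y` is invertible for every `λ ∈ I`, where
    -- `f₂(λ,x,y)` is the `Y`-component of `f(λ, x + y)`: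
    (hD : ∀ l ∈ Icc a b, ∃ D : Xᗮ →L[ℝ] Xᗮ, Function.Bijective D ∧
      HasFDerivAt (fun y : Xᗮ => Submodule.orthogonalProjection Xᗮ (gradient (ψ l) (y : H))) D 0) :
    ∃ δ > (0 : ℝ), ∃ g : ℝ → X → Xᗮ,
      -- `g` is continuous on `I × B`:
      ContinuousOn (fun p : ℝ × X => g p.1 p.2) (Icc a b ×ˢ ball 0 δ) ∧
      -- `g(λ,0) = 0`:
      (∀ l ∈ Icc a b, g l 0 = 0) ∧
      -- `(x, g(λ,x)) ∈ U` and `f₂(λ, x, g(λ,x)) = 0` on `I × B`: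
      (∀ l ∈ Icc a b, ∀ x ∈ ball (0 : X) δ,
        ((x : H) + (g l x : H)) ∈ U ∧
        Submodule.orthogonalProjection Xᗮ (gradient (ψ l) ((x : H) + (g l x : H))) = 0) ∧
      -- each `g_λ` is `C¹` on `B`:
      (∀ l ∈ Icc a b, ContDiffOn ℝ 1 (g l) (ball 0 δ)) ∧
      -- `(λ,x) ↦ D g_λ(x)` is continuous on `I × B`:
      ContinuousOn (fun p : ℝ × X => fderiv ℝ (g p.1) p.2) (Icc a b ×ˢ ball 0 δ) := by
  classical
  -- the projection composed with the dual identification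
  set J : (H →L[ℝ] ℝ) →L[ℝ] Xᗮ := (Submodule.orthogonalProjection Xᗮ).comp
    ((InnerProductSpace.toDual ℝ H).symm.toContinuousLinearEquiv :
      (H →L[ℝ] ℝ) ≃L[ℝ] H).toContinuousLinearMap with hJ
  have hJgrad : ∀ (f : H → ℝ) (h : H),
      (Submodule.orthogonalProjection Xᗮ (gradient f h) : Xᗮ) = J (fderiv ℝ f h) := fun f h => rfl
  -- the embedding `X × Xᗮ → H`
  set Eemb : X × Xᗮ →L[ℝ] H := (X.subtypeL).coprod (Xᗮ.subtypeL) with hEemb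
  have hEapp : ∀ p : X × Xᗮ, Eemb p = (p.1 : H) + (p.2 : H) := fun p => rfl
  set W : Set (X × Xᗮ) := Eemb ⁻¹' U with hWdef
  have hWopen : IsOpen W := hUopen.preimage Eemb.continuous
  have hW0 : (0 : X × Xᗮ) ∈ W := by
    show Eemb 0 ∈ U
    rw [map_zero]; exact hU0
  set Fm : ℝ → X × Xᗮ → Xᗮ := fun l p => J (fderiv ℝ (ψ l) (Eemb p)) with hFm
  set DF : ℝ → X × Xᗮ → X × Xᗮ →L[ℝ] Xᗮ := fun l p =>
    (J.comp (fderiv ℝ (fderiv ℝ (ψ l)) (Eemb p))).comp Eemb with hDF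
  -- derivative of `Fm l`
  have hderiv : ∀ l ∈ Icc a b, ∀ p ∈ W, HasFDerivAt (Fm l) (DF l p) p := by
    intro l hl p hp
    have hC2 := hψC2 l hl
    have hfd : ContDiffOn ℝ 1 (fderiv ℝ (ψ l)) U :=
      hC2.fderiv_of_isOpen hUopen (by norm_num)
    have hdiff : DifferentiableAt ℝ (fderiv ℝ (ψ l)) (Eemb p) :=
      (hfd.differentiableOn (by norm_num)).differentiableAt (hUopen.mem_nhds hp)
    have h1 : HasFDerivAt (fderiv ℝ (ψ l))
        (fderiv ℝ (fderiv ℝ (ψ l)) (Eemb p)) (Eemb p) := hdiff.hasFDerivAt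
    have h2 : HasFDerivAt (fun q : X × Xᗮ => fderiv ℝ (ψ l) (Eemb q))
        ((fderiv ℝ (fderiv ℝ (ψ l)) (Eemb p)).comp Eemb) p :=
      h1.comp p Eemb.hasFDerivAt
    have h3 := J.hasFDerivAt.comp p h2
    exact h3
  -- continuity of `Fm`
  have hmap : ∀ q : ℝ × (X × Xᗮ), q ∈ Icc a b ×ˢ W → ((q.1, Eemb q.2) : ℝ × H) ∈ Icc a b ×ˢ U :=
    fun q hq => ⟨hq.1, hq.2⟩
  have hEcont : Continuous (fun q : ℝ × (X × Xᗮ) => ((q.1, Eemb q.2) : ℝ × H)) :=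
    continuous_fst.prodMk (Eemb.continuous.comp continuous_snd)
  have hFcont : ContinuousOn (fun q : ℝ × (X × Xᗮ) => Fm q.1 q.2) (Icc a b ×ˢ W) := by
    have h1 : ContinuousOn (fun q : ℝ × (X × Xᗮ) => fderiv ℝ (ψ q.1) (Eemb q.2))
        (Icc a b ×ˢ W) := hψd1.comp hEcont.continuousOn hmap
    exact J.continuous.comp_continuousOn h1
  have hDFcont : ContinuousOn (fun q : ℝ × (X × Xᗮ) => DF q.1 q.2) (Icc a b ×ˢ W) := by
    have h1 : ContinuousOn (fun q : ℝ × (X × Xᗮ) => fderiv ℝ (fderiv ℝ (ψ q.1)) (Eemb q.2))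
        (Icc a b ×ˢ W) := hψd2.comp hEcont.continuousOn hmap
    have h2 : ContinuousOn (fun q : ℝ × (X × Xᗮ) =>
        J.comp (fderiv ℝ (fderiv ℝ (ψ q.1)) (Eemb q.2))) (Icc a b ×ˢ W) :=
      continuousOn_const.clm_comp h1
    exact h2.clm_comp continuousOn_const
  -- vanishing along the trivial branch
  have hF0 : ∀ l ∈ Icc a b, Fm l 0 = 0 := by
    intro l hl
    have : Fm l 0 = Submodule.orthogonalProjection Xᗮ (gradient (ψ l) (Eemb 0)) := (hJgrad (ψ l) _).symm
    rw [this, map_zero, hcrit l hl, map_zero]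
  -- invertibility of the partial derivative
  have hunit : ∀ l ∈ Icc a b, IsUnit ((DF l 0).comp (ContinuousLinearMap.inr ℝ X Xᗮ)) := by
    intro l hl
    obtain ⟨Dl, hDbij, hDder⟩ := hD l hl
    have hsame : HasFDerivAt (fun y : Xᗮ => Submodule.orthogonalProjection Xᗮ (gradient (ψ l) (y : H)))
        ((DF l 0).comp (ContinuousLinearMap.inr ℝ X Xᗮ)) 0 := by
      have h0W : (0 : X × Xᗮ) ∈ W := hW0
      have h1 := (hderiv l hl 0 h0W).comp (0 : Xᗮ)
        ((ContinuousLinearMap.inr ℝ X Xᗮ).hasFDerivAt (x := (0 : Xᗮ)))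
      have heq : (fun y : Xᗮ => Fm l (ContinuousLinearMap.inr ℝ X Xᗮ y))
          = fun y : Xᗮ => Submodule.orthogonalProjection Xᗮ (gradient (ψ l) (y : H)) := by
        funext y
        rw [hJgrad (ψ l) (y : H)]
        show J (fderiv ℝ (ψ l) (Eemb ((0 : X), y))) = J (fderiv ℝ (ψ l) (y : H))
        rw [hEapp]
        simp
      rw [← heq]
      exact h1
    have huniqD : Dl = (DF l 0).comp (ContinuousLinearMap.inr ℝ X Xᗮ) :=
      hDder.unique hsame
    rw [ContinuousLinearMap.isUnit_iff_bijective, ← huniqD]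
    exact hDbij
  -- apply the parametric implicit function theorem
  haveI : CompleteSpace Xᗮ := IsClosed.completeSpace_coe (hs := Submodule.isClosed_orthogonal X)
  obtain ⟨δ, hδpos, g, hgcont, hg0, hgsol, hgC1, hgfd⟩ :=
    LS.param_ift a b hab W hWopen hW0 Fm DF hderiv hFcont hDFcont hF0 hunit
  refine ⟨δ, hδpos, g, hgcont, hg0, ?_, hgC1, hgfd⟩
  intro l hl x hx
  obtain ⟨hmem, hzero⟩ := hgsol l hl x hx
  have hE : Eemb (x, g l x) = (x : H) + (g l x : H) := rfl
  constructor
  · have : Eemb (x, g l x) ∈ U := hmem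
    rwa [hE] at this
  · have : (Submodule.orthogonalProjection Xᗮ (gradient (ψ l) (Eemb (x, g l x))) : Xᗮ)
        = Fm l (x, g l x) := hJgrad (ψ l) _
    rw [← hE]
    rw [this, hzero]
end

section
/- Let I = [a,b] be a compact interval, ψ : I × U → ℝ a continuous family of C^2 functionals, and set f(λ,h) := ∇ψ_λ(h); assume f(λ,0) = 0 for all λ ∈ I. Let H = X ⊕ Y be an orthogonal splitting with dim X < ∞, write h = (x,y) and f(λ,h) = (f_1(λ,x,y), f_2(λ,x,y)), assume D_y f_2(λ,0,0) : Y → Y is invertible for every λ ∈ I, and let B ⊂ X and g : I × B → Y be as in the Lyapunov–Schmidt lemma, so that f_2(λ, x, g(λ,x)) = 0 on I × B. Define f̄(λ,x) := f_1(λ, x, g(λ,x)) and ψ̄(λ,x) := ψ(λ, x, g(λ,x)). Then ψ̄ : I × B → ℝ is a continuous family of C^2 functionals and ∇_x ψ̄(λ,x) = f̄(λ,x) for all (λ,x) ∈ I × B. -/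
open Set Metric RealInnerProductSpace

set_option maxHeartbeats 2000000 in
/-- **Lyapunov–Schmidt reduction, properties of the reduced functional.**
With the setting and the map `g` provided by the Lyapunov–Schmidt lemma, the reduced
family `ψ̄(λ,x) := ψ(λ, x + g(λ,x))` is a continuous family of `C²` functionals on
`I × B` and its gradient is `f̄(λ,x) := f₁(λ, x, g(λ,x))`, the `X`-component of
`∇ψ_λ` at `x + g(λ,x)`. -/
theorem lyapunov_schmidt_reduced_functional
    {H : Type*} [NormedAddCommGroup H] [InnerProductSpace ℝ H] [CompleteSpace H]
    [TopologicalSpace.SeparableSpace H]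
    (U : Set H) (hUopen : IsOpen U) (hU0 : (0 : H) ∈ U)
    (a b : ℝ) (hab : a ≤ b)
    (ψ : ℝ → H → ℝ)
    -- `ψ` is a continuous family of `C²` functionals parametrized by `I = [a,b]`:
    (hψC2 : ∀ l ∈ Icc a b, ContDiffOn ℝ 2 (ψ l) U)
    (hψcont : ContinuousOn (fun p : ℝ × H => ψ p.1 p.2) (Icc a b ×ˢ U))
    (hψd1 : ContinuousOn (fun p : ℝ × H => fderiv ℝ (ψ p.1) p.2) (Icc a b ×ˢ U))
    (hψd2 : ContinuousOn (fun p : ℝ × H => fderiv ℝ (fderiv ℝ (ψ p.1)) p.2) (Icc a b ×ˢ U))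
    -- `f(λ, 0) = 0` for all `λ ∈ I`, where `f(λ,h) := ∇ψ_λ(h)`:
    (hcrit : ∀ l ∈ Icc a b, gradient (ψ l) 0 = 0)
    -- orthogonal splitting `H = X ⊕ Y` with `Y = Xᗮ` and `dim X < ∞`:
    (X : Submodule ℝ H) [FiniteDimensional ℝ X]
    -- `D_y f₂(λ,0,0) : Y → Y` is invertible for every `λ ∈ I`:
    (hD : ∀ l ∈ Icc a b, ∃ D : Xᗮ →L[ℝ] Xᗮ, Function.Bijective D ∧
      HasFDerivAt (fun y : Xᗮ => Submodule.orthogonalProjection Xᗮ (gradient (ψ l) (y : H))) D 0)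
    -- `B ⊆ X` and `g : I × B → Y` as provided by the Lyapunov–Schmidt lemma:
    (δ : ℝ) (hδ : 0 < δ) (g : ℝ → X → Xᗮ)
    (hgcont : ContinuousOn (fun p : ℝ × X => g p.1 p.2) (Icc a b ×ˢ ball 0 δ))
    (hg0 : ∀ l ∈ Icc a b, g l 0 = 0)
    (hgsol : ∀ l ∈ Icc a b, ∀ x ∈ ball (0 : X) δ,
      ((x : H) + (g l x : H)) ∈ U ∧
      Submodule.orthogonalProjection Xᗮ (gradient (ψ l) ((x : H) + (g l x : H))) = 0)
    (hgC1 : ∀ l ∈ Icc a b, ContDiffOn ℝ 1 (g l) (ball 0 δ))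
    (hgd : ContinuousOn (fun p : ℝ × X => fderiv ℝ (g p.1) p.2) (Icc a b ×ˢ ball 0 δ)) :
    -- `ψ̄(λ,x) := ψ(λ, x + g(λ,x))` is a continuous family of `C²` functionals on `I × B`:
    (∀ l ∈ Icc a b,
      ContDiffOn ℝ 2 (fun x : X => ψ l ((x : H) + (g l x : H))) (ball 0 δ)) ∧
    ContinuousOn (fun p : ℝ × X => ψ p.1 ((p.2 : H) + (g p.1 p.2 : H)))
      (Icc a b ×ˢ ball 0 δ) ∧
    ContinuousOn (fun p : ℝ × X =>
        fderiv ℝ (fun x : X => ψ p.1 ((x : H) + (g p.1 x : H))) p.2)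
      (Icc a b ×ˢ ball 0 δ) ∧
    ContinuousOn (fun p : ℝ × X =>
        fderiv ℝ (fderiv ℝ (fun x : X => ψ p.1 ((x : H) + (g p.1 x : H)))) p.2)
      (Icc a b ×ˢ ball 0 δ) ∧
    -- `∇_x ψ̄(λ,x) = f̄(λ,x) = f₁(λ, x, g(λ,x))` on `I × B`:
    (∀ l ∈ Icc a b, ∀ x ∈ ball (0 : X) δ,
      gradient (fun x' : X => ψ l ((x' : H) + (g l x' : H))) x
        = Submodule.orthogonalProjection X (gradient (ψ l) ((x : H) + (g l x : H)))) := by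
  have hball : IsOpen (ball (0 : X) δ) := isOpen_ball
  set ι : X →L[ℝ] H := X.subtypeL with hιdef
  set κ : Xᗮ →L[ℝ] H := (Xᗮ).subtypeL with hκdef
  set R : (H →L[ℝ] ℝ) →L[ℝ] (X →L[ℝ] ℝ) :=
    (ContinuousLinearMap.compL ℝ X H ℝ).flip ι with hRdef
  have hRapp : ∀ A : H →L[ℝ] ℝ, R A = A.comp ι := fun A => rfl
  have hmem : ∀ l ∈ Icc a b, ∀ x ∈ ball (0 : X) δ, ((x : H) + (g l x : H)) ∈ U :=
    fun l hl x hx => (hgsol l hl x hx).1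
  have hperp : ∀ l ∈ Icc a b, ∀ x ∈ ball (0 : X) δ, ∀ v : Xᗮ,
      ⟪gradient (ψ l) ((x : H) + (g l x : H)), (v : H)⟫ = 0 := by
    intro l hl x hx v
    have h0 := Submodule.orthogonalProjectionOnto_eq_zero_iff.mp (hgsol l hl x hx).2
    rw [real_inner_comm]; exact h0 _ v.2
  have hgradlink : ∀ (f : H → ℝ) (x v : H), fderiv ℝ f x v = ⟪gradient f x, v⟫ := by
    intro f x v
    rw [gradient, ← InnerProductSpace.toDual_apply_apply, LinearIsometryEquiv.apply_symm_apply]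
  have hgdiff : ∀ l ∈ Icc a b, ∀ x ∈ ball (0 : X) δ,
      HasFDerivAt (g l) (fderiv ℝ (g l) x) x := fun l hl x hx =>
    (((hgC1 l hl).contDiffAt (hball.mem_nhds hx)).differentiableAt one_ne_zero).hasFDerivAt
  have hhdiff : ∀ l ∈ Icc a b, ∀ x ∈ ball (0 : X) δ,
      HasFDerivAt (fun x' : X => (x' : H) + (g l x' : H))
        (ι + κ.comp (fderiv ℝ (g l) x)) x := by
    intro l hl x hx
    exact ι.hasFDerivAt.add (κ.hasFDerivAt.comp x (hgdiff l hl x hx))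
  have hψC2' : ∀ l ∈ Icc a b, ∀ x ∈ ball (0 : X) δ,
      ContDiffAt ℝ 2 (ψ l) ((x : H) + (g l x : H)) := fun l hl x hx =>
    (hψC2 l hl).contDiffAt (hUopen.mem_nhds (hmem l hl x hx))
  have hkey : ∀ l ∈ Icc a b, ∀ x ∈ ball (0 : X) δ,
      HasFDerivAt (fun x' : X => ψ l ((x' : H) + (g l x' : H)))
        ((fderiv ℝ (ψ l) ((x : H) + (g l x : H))).comp ι) x := by
    intro l hl x hx
    have h1 : HasFDerivAt (ψ l) (fderiv ℝ (ψ l) ((x : H) + (g l x : H)))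
        ((x : H) + (g l x : H)) :=
      ((hψC2' l hl x hx).differentiableAt (by norm_num)).hasFDerivAt
    have h2 := h1.comp x (hhdiff l hl x hx)
    have h3 : (fderiv ℝ (ψ l) ((x : H) + (g l x : H))).comp (ι + κ.comp (fderiv ℝ (g l) x))
        = (fderiv ℝ (ψ l) ((x : H) + (g l x : H))).comp ι := by
      ext u
      simp only [ContinuousLinearMap.comp_apply, ContinuousLinearMap.add_apply, map_add,
        hκdef, Submodule.subtypeL_apply]
      rw [hgradlink, hgradlink, hperp l hl x hx, add_zero]
    rw [h3] at h2
    exact h2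
  have hfderivF : ∀ l ∈ Icc a b, ∀ x ∈ ball (0 : X) δ,
      fderiv ℝ (fun x' : X => ψ l ((x' : H) + (g l x' : H))) x
        = (fderiv ℝ (ψ l) ((x : H) + (g l x : H))).comp ι :=
    fun l hl x hx => (hkey l hl x hx).fderiv
  have hcontpair : ContinuousOn (fun p : ℝ × X => (p.1, (p.2 : H) + (g p.1 p.2 : H)))
      (Icc a b ×ˢ ball 0 δ) := by
    refine continuous_fst.continuousOn.prodMk ?_
    exact ((continuous_subtype_val.comp continuous_snd).continuousOn).add
      (continuous_subtype_val.comp_continuousOn hgcont)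
  have hmaps : MapsTo (fun p : ℝ × X => (p.1, (p.2 : H) + (g p.1 p.2 : H)))
      (Icc a b ×ˢ ball 0 δ) (Icc a b ×ˢ U) := by
    rintro ⟨l, x⟩ ⟨hl, hx⟩
    exact ⟨hl, hmem l hl x hx⟩
  have hcont1 : ContinuousOn (fun p : ℝ × X =>
      (fderiv ℝ (ψ p.1) ((p.2 : H) + (g p.1 p.2 : H))).comp ι) (Icc a b ×ˢ ball 0 δ) :=
    (hψd1.comp hcontpair hmaps).clm_comp continuousOn_const
  have hhC1 : ∀ l ∈ Icc a b, ContDiffOn ℝ 1 (fun x : X => (x : H) + (g l x : H)) (ball 0 δ) := by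
    intro l hl
    exact (ι.contDiff.contDiffOn).add (κ.contDiff.comp_contDiffOn (hgC1 l hl))
  have hdψC1 : ∀ l ∈ Icc a b, ContDiffOn ℝ 1 (fderiv ℝ (ψ l)) U :=
    fun l hl => (hψC2 l hl).fderiv_of_isOpen hUopen (by norm_num)
  have hfC1 : ∀ l ∈ Icc a b, ContDiffOn ℝ 1
      (fun x : X => fderiv ℝ (fun x' : X => ψ l ((x' : H) + (g l x' : H))) x)
      (ball 0 δ) := by
    intro l hl
    have h1 : ContDiffOn ℝ 1
        (fun x : X => (fderiv ℝ (ψ l) ((x : H) + (g l x : H))).comp ι) (ball 0 δ) :=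
      ContDiffOn.clm_comp
        ((hdψC1 l hl).comp (hhC1 l hl) (fun x hx => hmem l hl x hx)) contDiffOn_const
    exact h1.congr (fun x hx => hfderivF l hl x hx)
  have hC2 : ∀ l ∈ Icc a b,
      ContDiffOn ℝ 2 (fun x : X => ψ l ((x : H) + (g l x : H))) (ball 0 δ) := by
    intro l hl
    have h21 : (2 : WithTop ℕ∞) = 1 + 1 := by rfl
    rw [h21, contDiffOn_succ_iff_fderiv_of_isOpen hball]
    refine ⟨fun x hx => ((hkey l hl x hx).differentiableAt).differentiableWithinAt,
      ?_, hfC1 l hl⟩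
    intro h; exact absurd h (by simp)
  have hkey2 : ∀ l ∈ Icc a b, ∀ x ∈ ball (0 : X) δ,
      fderiv ℝ (fderiv ℝ (fun x' : X => ψ l ((x' : H) + (g l x' : H)))) x
        = R.comp ((fderiv ℝ (fderiv ℝ (ψ l)) ((x : H) + (g l x : H))).comp
            (ι + κ.comp (fderiv ℝ (g l) x))) := by
    intro l hl x hx
    have heq : (fderiv ℝ (fun x' : X => ψ l ((x' : H) + (g l x' : H))))
        =ᶠ[nhds x] (fun x' : X => R (fderiv ℝ (ψ l) ((x' : H) + (g l x' : H)))) := by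
      filter_upwards [hball.mem_nhds hx] with x' hx'
      rw [hfderivF l hl x' hx', hRapp]
    have h1 : HasFDerivAt (fderiv ℝ (ψ l))
        (fderiv ℝ (fderiv ℝ (ψ l)) ((x : H) + (g l x : H))) ((x : H) + (g l x : H)) :=
      ((((hψC2' l hl x hx).fderiv_right (m := 1)
        (by norm_num : (1 : WithTop ℕ∞) + 1 ≤ 2)).differentiableAt one_ne_zero).hasFDerivAt)
    have h2 := h1.comp x (hhdiff l hl x hx)
    have h3 := HasFDerivAt.comp x (g := ⇑R) (g' := R) (R.hasFDerivAt) h2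
    rw [heq.fderiv_eq]
    exact h3.fderiv
  have hcont2 : ContinuousOn (fun p : ℝ × X =>
      R.comp ((fderiv ℝ (fderiv ℝ (ψ p.1)) ((p.2 : H) + (g p.1 p.2 : H))).comp
        (ι + κ.comp (fderiv ℝ (g p.1) p.2)))) (Icc a b ×ˢ ball 0 δ) := by
    refine continuousOn_const.clm_comp ?_
    refine (hψd2.comp hcontpair hmaps).clm_comp ?_
    exact continuousOn_const.add (continuousOn_const.clm_comp hgd)
  have hproj : ∀ (w : H) (u : X),
      ⟪(Submodule.orthogonalProjection X w : H), (u : H)⟫ = ⟪w, (u : H)⟫ := by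
    intro w u
    have h : w - (Submodule.orthogonalProjection X w : H) ∈ Xᗮ :=
      Submodule.sub_starProjection_mem_orthogonal (K := X) w
    have h2 := (Submodule.mem_orthogonal X _).mp h _ u.2
    rw [real_inner_comm] at h2
    rw [inner_sub_left] at h2
    linarith
  refine ⟨hC2, hψcont.comp hcontpair hmaps, ?_, ?_, ?_⟩
  · refine hcont1.congr ?_
    rintro ⟨l, x⟩ ⟨hl, hx⟩
    exact hfderivF l hl x hx
  · refine hcont2.congr ?_
    rintro ⟨l, x⟩ ⟨hl, hx⟩
    exact hkey2 l hl x hx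
  · intro l hl x hx
    rw [gradient, hfderivF l hl x hx]
    apply (InnerProductSpace.toDual ℝ X).injective
    rw [LinearIsometryEquiv.apply_symm_apply]
    ext u
    rw [InnerProductSpace.toDual_apply_apply]
    simp only [ContinuousLinearMap.comp_apply, hιdef, Submodule.subtypeL_apply]
    rw [hgradlink, Submodule.coe_inner, hproj]
end

section
/- Let I = [a,b], ψ : I × U → ℝ a continuous family of C^2 functionals with f(λ,h) := ∇ψ_λ(h) and f(λ,0) = 0 for all λ ∈ I, let H = X ⊕ Y be an orthogonal splitting with dim X < ∞ such that D_y f_2(λ,0,0) : Y → Y is invertible for all λ ∈ I, and let B ⊂ X, g : I × B → Y and the reduced family ψ̄(λ,x) := ψ(λ, x, g(λ,x)) be as produced by the Lyapunov–Schmidt lemma. Then a point λ* ∈ I is a bifurcation point of critical points of ψ from the trivial branch if and only if λ* is a bifurcation point of critical points of ψ̄ : I × B → ℝ from the trivial branch. -/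
open Set Metric

/-- A point `l₀` of the parameter space `P ⊆ Λ` is a bifurcation point of critical points of
the family `ψ` from the trivial branch if every neighborhood of `(l₀, 0)` contains a point
`(λ, x)` with `λ ∈ P`, `x ∈ U`, `x ≠ 0` and `∇ψ_λ(x) = 0`. -/
def IsBifurcationPoint {Λ : Type*} [TopologicalSpace Λ] {E : Type*} [NormedAddCommGroup E]
    [InnerProductSpace ℝ E] [CompleteSpace E] (P : Set Λ) (U : Set E) (ψ : Λ → E → ℝ)
    (l₀ : Λ) : Prop :=
  ∀ W ∈ nhds (l₀, (0 : E)), ∃ p : Λ × E,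
    p ∈ W ∧ p.1 ∈ P ∧ p.2 ∈ U ∧ p.2 ≠ 0 ∧ gradient (ψ p.1) p.2 = 0

/-- **Bifurcation is preserved by the Lyapunov–Schmidt reduction.**
In the Lyapunov–Schmidt setting, a point `λ* ∈ I` is a bifurcation point of critical points
of `ψ` from the trivial branch iff it is a bifurcation point of critical points of the
reduced family `ψ̄(λ,x) = ψ(λ, x + g(λ,x))` from the trivial branch. -/
theorem lyapunov_schmidt_preserves_bifurcation
    {H : Type*} [NormedAddCommGroup H] [InnerProductSpace ℝ H] [CompleteSpace H]
    [TopologicalSpace.SeparableSpace H]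
    (U : Set H) (hUopen : IsOpen U) (hU0 : (0 : H) ∈ U)
    (a b : ℝ) (hab : a ≤ b)
    (ψ : ℝ → H → ℝ)
    -- `ψ` is a continuous family of `C²` functionals parametrized by `I = [a,b]`:
    (hψC2 : ∀ l ∈ Icc a b, ContDiffOn ℝ 2 (ψ l) U)
    (hψcont : ContinuousOn (fun p : ℝ × H => ψ p.1 p.2) (Icc a b ×ˢ U))
    (hψd1 : ContinuousOn (fun p : ℝ × H => fderiv ℝ (ψ p.1) p.2) (Icc a b ×ˢ U))
    (hψd2 : ContinuousOn (fun p : ℝ × H => fderiv ℝ (fderiv ℝ (ψ p.1)) p.2) (Icc a b ×ˢ U))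
    -- `f(λ, 0) = 0` for all `λ ∈ I`, where `f(λ,h) := ∇ψ_λ(h)`:
    (hcrit : ∀ l ∈ Icc a b, gradient (ψ l) 0 = 0)
    -- orthogonal splitting `H = X ⊕ Y` with `Y = Xᗮ` and `dim X < ∞`:
    (X : Submodule ℝ H) [FiniteDimensional ℝ X]
    -- `D_y f₂(λ,0,0) : Y → Y` is invertible for every `λ ∈ I`:
    (hD : ∀ l ∈ Icc a b, ∃ D : Xᗮ →L[ℝ] Xᗮ, Function.Bijective D ∧
      HasFDerivAt (fun y : Xᗮ => Submodule.orthogonalProjectionOnto Xᗮ (gradient (ψ l) (y : H))) D 0)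
    -- `B ⊆ X` and `g : I × B → Y` as provided by the Lyapunov–Schmidt lemma:
    (δ : ℝ) (hδ : 0 < δ) (g : ℝ → X → Xᗮ)
    (hgcont : ContinuousOn (fun p : ℝ × X => g p.1 p.2) (Icc a b ×ˢ ball 0 δ))
    (hg0 : ∀ l ∈ Icc a b, g l 0 = 0)
    (hgsol : ∀ l ∈ Icc a b, ∀ x ∈ ball (0 : X) δ,
      ((x : H) + (g l x : H)) ∈ U ∧
      Submodule.orthogonalProjectionOnto Xᗮ (gradient (ψ l) ((x : H) + (g l x : H))) = 0)
    (hgC1 : ∀ l ∈ Icc a b, ContDiffOn ℝ 1 (g l) (ball 0 δ))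
    (hgd : ContinuousOn (fun p : ℝ × X => fderiv ℝ (g p.1) p.2) (Icc a b ×ˢ ball 0 δ))
    -- `g(λ,x)` is the unique `y` in a fixed ball of `Y` solving `f₂(λ,x,y) = 0`:
    (ε : ℝ) (hε : 0 < ε)
    (hgball : ∀ l ∈ Icc a b, ∀ x ∈ ball (0 : X) δ, ‖g l x‖ ≤ ε)
    (hguniq : ∀ l ∈ Icc a b, ∀ x ∈ ball (0 : X) δ, ∀ y : Xᗮ, ‖y‖ ≤ ε →
      ((x : H) + (y : H)) ∈ U →
      Submodule.orthogonalProjectionOnto Xᗮ (gradient (ψ l) ((x : H) + (y : H))) = 0 → y = g l x) :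
    -- `λ*` bifurcates for `ψ` iff it bifurcates for the reduced family `ψ̄`:
    ∀ lstar ∈ Icc a b,
      IsBifurcationPoint (Icc a b) U ψ lstar ↔
      IsBifurcationPoint (Icc a b) (ball (0 : X) δ)
        (fun l (x : X) => ψ l ((x : H) + (g l x : H))) lstar := by
  intro lstar hlstar
  classical
  -- the key chain rule fact for the reduced functional
  have key : ∀ l ∈ Icc a b, ∀ x ∈ ball (0 : X) δ,
      HasFDerivAt (fun x : X => ψ l ((x : H) + (g l x : H)))
        ((fderiv ℝ (ψ l) ((x : H) + (g l x : H))).comp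
          (X.subtypeL + Xᗮ.subtypeL.comp (fderiv ℝ (g l) x))) x := by
    intro l hl x hx
    have hgdiff : DifferentiableAt ℝ (g l) x :=
      ((hgC1 l hl).contDiffAt (isOpen_ball.mem_nhds hx)).differentiableAt one_ne_zero
    have hF : HasFDerivAt (fun x : X => (x : H) + (g l x : H))
        (X.subtypeL + Xᗮ.subtypeL.comp (fderiv ℝ (g l) x)) x :=
      (X.subtypeL.hasFDerivAt).add ((Xᗮ.subtypeL.hasFDerivAt).comp x hgdiff.hasFDerivAt)
    have hU' := (hgsol l hl x hx).1
    have hψdiff : DifferentiableAt ℝ (ψ l) ((x : H) + (g l x : H)) :=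
      ((hψC2 l hl).contDiffAt (hUopen.mem_nhds hU')).differentiableAt two_ne_zero
    exact hψdiff.hasFDerivAt.comp x hF
  -- transfer of criticality: from ψ to the reduced functional
  have core1 : ∀ l ∈ Icc a b, ∀ x ∈ ball (0 : X) δ,
      gradient (ψ l) ((x : H) + (g l x : H)) = 0 →
      gradient (fun x : X => ψ l ((x : H) + (g l x : H))) x = 0 := by
    intro l hl x hx hG
    have hfd0 : fderiv ℝ (ψ l) ((x : H) + (g l x : H)) = 0 := by
      have := congrArg (InnerProductSpace.toDual ℝ H) hG
      simpa [gradient] using this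
    have hk := (key l hl x hx).fderiv
    rw [gradient, hk, hfd0]
    simp
  -- transfer of criticality: from the reduced functional to ψ
  have core2 : ∀ l ∈ Icc a b, ∀ x ∈ ball (0 : X) δ,
      gradient (fun x : X => ψ l ((x : H) + (g l x : H))) x = 0 →
      gradient (ψ l) ((x : H) + (g l x : H)) = 0 := by
    intro l hl x hx h0
    set h : H := (x : H) + (g l x : H) with hh
    set G : H := gradient (ψ l) h with hGdef
    have hproj : Submodule.orthogonalProjectionOnto Xᗮ G = 0 := (hgsol l hl x hx).2
    have hGX : G ∈ X := by
      have hmem : G ∈ Xᗮᗮ := Submodule.orthogonalProjectionOnto_eq_zero_iff.mp hproj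
      rwa [Submodule.orthogonal_orthogonal X] at hmem
    have hfd0 : fderiv ℝ (fun x : X => ψ l ((x : H) + (g l x : H))) x = 0 := by
      have := congrArg (InnerProductSpace.toDual ℝ X) h0
      simpa [gradient] using this
    have hfd := (key l hl x hx).fderiv
    rw [hfd0] at hfd
    have happ := congrFun (congrArg DFunLike.coe hfd) ⟨G, hGX⟩
    have hψfd : fderiv ℝ (ψ l) h = InnerProductSpace.toDual ℝ H G := by
      rw [hGdef, gradient]
      exact ((InnerProductSpace.toDual ℝ H).apply_symm_apply _).symm
    have hdg : ((fderiv ℝ (g l) x ⟨G, hGX⟩ : Xᗮ) : H) ∈ Xᗮ := Submodule.coe_mem _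
    have hperp : (inner ℝ G ((fderiv ℝ (g l) x ⟨G, hGX⟩ : Xᗮ) : H) : ℝ) = 0 :=
      (Submodule.mem_orthogonal X _).mp hdg G hGX
    have hzero : (inner ℝ G G : ℝ) = 0 := by
      have := happ.symm
      rw [← hh] at this
      simp only [ContinuousLinearMap.comp_apply, ContinuousLinearMap.add_apply,
        ContinuousLinearMap.coe_comp', Function.comp_apply, Submodule.subtypeL_apply,
        ContinuousLinearMap.zero_apply, hψfd, InnerProductSpace.toDual_apply_apply] at this
      rw [inner_add_right, hperp, add_zero] at this
      exact this
    have : G = 0 := inner_self_eq_zero.mp hzero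
    rw [hGdef] at this
    exact this
  constructor
  · -- ψ bifurcates → reduced family bifurcates
    intro hbif W hW
    set π : ℝ × H → ℝ × X := fun p => (p.1, Submodule.orthogonalProjectionOnto X p.2) with hπ
    have hπcont : Continuous π :=
      continuous_fst.prodMk ((Submodule.orthogonalProjectionOnto X).continuous.comp continuous_snd)
    have hπ0 : π (lstar, 0) = (lstar, 0) := by simp [hπ]
    set r : ℝ := min δ ε with hr
    have hrpos : 0 < r := lt_min hδ hε
    have hW' : π ⁻¹' W ∩ ((univ : Set ℝ) ×ˢ (ball (0 : H) r ∩ U)) ∈ nhds (lstar, (0 : H)) := by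
      refine Filter.inter_mem ?_ ?_
      · exact hπcont.continuousAt.preimage_mem_nhds (by rwa [hπ0])
      · exact prod_mem_nhds Filter.univ_mem
          ((isOpen_ball.inter hUopen).mem_nhds ⟨mem_ball_self hrpos, hU0⟩)
    obtain ⟨p, hpW', hpI, hpU, hpne, hpgrad⟩ := hbif _ hW'
    obtain ⟨l, h⟩ := p
    obtain ⟨hπW, -, hball, -⟩ := hpW'
    set x : X := Submodule.orthogonalProjectionOnto X h with hxdef
    set y : Xᗮ := Submodule.orthogonalProjectionOnto Xᗮ h with hydef
    have hsum : (x : H) + (y : H) = h :=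
      X.starProjection_add_starProjection_orthogonal h
    have hnormh : ‖h‖ < r := by simpa using hball
    have hnx : ‖x‖ ≤ ‖h‖ := by
      calc ‖Submodule.orthogonalProjectionOnto X h‖ ≤ ‖Submodule.orthogonalProjectionOnto X‖ * ‖h‖ :=
            (Submodule.orthogonalProjectionOnto X).le_opNorm h
        _ ≤ 1 * ‖h‖ := by gcongr; exact Submodule.orthogonalProjectionOnto_norm_le X
        _ = ‖h‖ := one_mul _
    have hny : ‖y‖ ≤ ‖h‖ := by
      calc ‖Submodule.orthogonalProjectionOnto Xᗮ h‖ ≤ ‖Submodule.orthogonalProjectionOnto Xᗮ‖ * ‖h‖ :=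
            (Submodule.orthogonalProjectionOnto Xᗮ).le_opNorm h
        _ ≤ 1 * ‖h‖ := by gcongr; exact Submodule.orthogonalProjectionOnto_norm_le Xᗮ
        _ = ‖h‖ := one_mul _
    have hxball : x ∈ ball (0 : X) δ := by
      rw [mem_ball_zero_iff]
      exact lt_of_le_of_lt hnx (lt_of_lt_of_le hnormh (min_le_left _ _))
    have hyε : ‖y‖ ≤ ε :=
      le_trans hny (le_of_lt (lt_of_lt_of_le hnormh (min_le_right _ _)))
    have hU' : (x : H) + (y : H) ∈ U := by rwa [hsum]
    have hprojgrad : Submodule.orthogonalProjectionOnto Xᗮ (gradient (ψ l) ((x : H) + (y : H))) = 0 := by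
      rw [hsum, hpgrad]; simp
    have hyg : y = g l x := hguniq l hpI x hxball y hyε hU' hprojgrad
    have hxne : x ≠ 0 := by
      intro hx0
      apply hpne
      rw [← hsum, hx0, hyg, hx0, hg0 l hpI]
      simp
    refine ⟨(l, x), hπW, hpI, hxball, hxne, ?_⟩
    apply core1 l hpI x hxball
    rw [← hyg, hsum]
    exact hpgrad
  · -- reduced family bifurcates → ψ bifurcates
    intro hbif W hW
    set S : Set (ℝ × X) := Icc a b ×ˢ ball (0 : X) δ with hS
    set Φ : ℝ × X → ℝ × H := fun p => (p.1, (p.2 : H) + (g p.1 p.2 : H)) with hΦ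
    have hΦcont : ContinuousOn Φ S := by
      apply ContinuousOn.prodMk continuousOn_fst
      exact ((continuous_subtype_val.comp continuous_snd).continuousOn).add
        (continuous_subtype_val.comp_continuousOn hgcont)
    have h0S : (lstar, (0 : X)) ∈ S := ⟨hlstar, mem_ball_self hδ⟩
    have hΦ0 : Φ (lstar, 0) = (lstar, (0 : H)) := by
      simp [hΦ, hg0 lstar hlstar]
    have hpre : Φ ⁻¹' W ∈ nhdsWithin (lstar, (0 : X)) S := by
      apply hΦcont (lstar, 0) h0S
      rwa [hΦ0]
    obtain ⟨V, hVopen, hV0, hVsub⟩ := mem_nhdsWithin.mp hpre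
    obtain ⟨p, hpV, hpI, hpball, hpne, hpgrad⟩ := hbif V (hVopen.mem_nhds hV0)
    have hpS : p ∈ S := ⟨hpI, hpball⟩
    have hΦpW : Φ p ∈ W := hVsub ⟨hpV, hpS⟩
    refine ⟨Φ p, hΦpW, hpI, (hgsol p.1 hpI p.2 hpball).1, ?_, ?_⟩
    · intro hzero
      apply hpne
      have := congrArg (Submodule.orthogonalProjectionOnto X) hzero
      rw [map_add, Submodule.orthogonalProjectionOnto_mem_subspace_eq_self,
        Submodule.orthogonalProjectionOnto_apply_of_mem_orthogonal
          (Submodule.coe_mem _), add_zero, map_zero] at this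
      simpa using this
    · exact core2 p.1 hpI p.2 hpball hpgrad
end

section
/- Let A be a real symmetric 2n×2n matrix. Then there exists K ∈ ℕ such that for every integer k ≥ K the matrix L^k(A) is invertible and its signature sgn L^k(A) equals 0. In particular, the index i(A) := (1/2)·Σ_{k=1}^∞ sgn L^k(A) is a well-defined finite sum. -/
open Set

/-- The standard symplectic `2n×2n` matrix `σ`, in block form `[[0, 1], [-1, 0]]`. -/
noncomputable def sympMat (n : ℕ) : Matrix (Fin n ⊕ Fin n) (Fin n ⊕ Fin n) ℝ :=
  Matrix.fromBlocks 0 1 (-1) 0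

/-- The `4n×4n` block matrix `L^k(A) = [[A/k, σ], [-σ, A/k]]`, `k ≥ 1`. -/
noncomputable def LkMat (n : ℕ) (A : Matrix (Fin n ⊕ Fin n) (Fin n ⊕ Fin n) ℝ) (k : ℕ) :
    Matrix ((Fin n ⊕ Fin n) ⊕ (Fin n ⊕ Fin n)) ((Fin n ⊕ Fin n) ⊕ (Fin n ⊕ Fin n)) ℝ :=
  Matrix.fromBlocks ((1 / (k : ℝ)) • A) (sympMat n) (-(sympMat n)) ((1 / (k : ℝ)) • A)

/-- The signature of a real symmetric matrix: the number of positive eigenvalues minus the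
number of negative eigenvalues, counted with multiplicity (junk value `0` if the matrix is
not symmetric). -/
noncomputable def matSign {m : Type*} [Fintype m] [DecidableEq m]
    (A : Matrix m m ℝ) : ℤ :=
  if hA : A.IsHermitian then
    ((Finset.univ.filter fun i => 0 < hA.eigenvalues i).card : ℤ) -
    ((Finset.univ.filter fun i => hA.eigenvalues i < 0).card : ℤ)
  else 0

/-- The index `i(A) = (1/2) Σ_{k≥1} sgn L^k(A)` of a symmetric `2n×2n` matrix `A`. -/
noncomputable def hamIndex (n : ℕ) (A : Matrix (Fin n ⊕ Fin n) (Fin n ⊕ Fin n) ℝ) : ℚ :=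
  (1 / 2 : ℚ) * ∑ᶠ k : ℕ, if 1 ≤ k then (matSign (LkMat n A k) : ℚ) else 0

section AuxSetup
set_option linter.unusedSectionVars false
set_option maxHeartbeats 1000000
open Matrix Finset Module
open scoped RealInnerProductSpace


variable {m : Type*} [Fintype m] [DecidableEq m]

lemma eucl_abs_coord_le (x : EuclideanSpace ℝ m) (i : m) : |x i| ≤ ‖x‖ := by
  rw [EuclideanSpace.norm_eq]
  have h1 : |x i| ^ 2 ≤ ∑ j, ‖x j‖ ^ 2 := by
    have : ‖x i‖ ^ 2 ≤ ∑ j, ‖x j‖ ^ 2 :=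
      Finset.single_le_sum (f := fun j => ‖x j‖ ^ 2) (fun j _ => sq_nonneg _) (mem_univ i)
    simpa [Real.norm_eq_abs] using this
  have := Real.sqrt_le_sqrt h1
  rwa [Real.sqrt_sq (abs_nonneg _)] at this

lemma eucl_norm_le_sum_abs (x : EuclideanSpace ℝ m) : ‖x‖ ≤ ∑ i, |x i| := by
  rw [EuclideanSpace.norm_eq]
  have h1 : ∑ j, ‖x j‖ ^ 2 ≤ (∑ i, |x i|) ^ 2 := by
    simpa [Real.norm_eq_abs] using
      Finset.sum_sq_le_sq_sum_of_nonneg (s := univ) (f := fun i => |x i|)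
        (fun i _ => abs_nonneg _)
  have := Real.sqrt_le_sqrt h1
  rwa [Real.sqrt_sq (Finset.sum_nonneg fun i _ => abs_nonneg _)] at this

lemma opBound (M : Matrix m m ℝ) (x : EuclideanSpace ℝ m) :
    ‖Matrix.toEuclideanLin M x‖ ≤ (∑ i, ∑ j, |M i j|) * ‖x‖ := by
  refine le_trans (eucl_norm_le_sum_abs _) ?_
  rw [Finset.sum_mul]
  refine Finset.sum_le_sum fun i _ => ?_
  have h1 : (Matrix.toEuclideanLin M x) i = ∑ j, M i j * x j := rfl
  rw [h1, Finset.sum_mul]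
  refine le_trans (Finset.abs_sum_le_sum_abs _ _) (Finset.sum_le_sum fun j _ => ?_)
  rw [abs_mul]
  exact mul_le_mul_of_nonneg_left (eucl_abs_coord_le x j) (abs_nonneg _)

lemma key_lemma (L L₀ E J : Matrix m m ℝ)
    (hsum : L = L₀ + E) (hL : L.IsHermitian) (hL₀ : L₀.IsHermitian)
    (hL₀sq : L₀ * L₀ = 1) (hJ : J * J = 1) (hJa : J * L₀ = -(L₀ * J))
    {ε : ℝ} (hε : ε < 1)
    (hE : ∀ x : EuclideanSpace ℝ m, ‖Matrix.toEuclideanLin E x‖ ≤ ε * ‖x‖) :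
    IsUnit L ∧ matSign L = 0 := by
  classical
  set T : EuclideanSpace ℝ m →ₗ[ℝ] EuclideanSpace ℝ m := Matrix.toEuclideanLin L with hTdef
  set T₀ : EuclideanSpace ℝ m →ₗ[ℝ] EuclideanSpace ℝ m := Matrix.toEuclideanLin L₀ with hT₀def
  set TE : EuclideanSpace ℝ m →ₗ[ℝ] EuclideanSpace ℝ m := Matrix.toEuclideanLin E with hTEdef
  have hT : ∀ x, T x = T₀ x + TE x := by
    intro x
    rw [hTdef, hsum, map_add]; rfl
  have hTsym : T.IsSymmetric := isHermitian_iff_isSymmetric.1 hL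
  have hT₀sym : T₀.IsSymmetric := isHermitian_iff_isSymmetric.1 hL₀
  have hT₀sq : ∀ x, T₀ (T₀ x) = x := by
    intro x
    show Matrix.toEuclideanLin L₀ (Matrix.toEuclideanLin L₀ x) = x
    simp only [Matrix.toEuclideanLin_apply, Equiv.apply_symm_apply, Matrix.mulVec_mulVec, hL₀sq,
      Matrix.one_mulVec, Equiv.symm_apply_apply]
  have hT₀norm : ∀ x : EuclideanSpace ℝ m, ‖T₀ x‖ = ‖x‖ := by
    intro x
    have h1 : ⟪T₀ x, T₀ x⟫ = ⟪x, x⟫ := by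
      rw [← hT₀sym (T₀ x) x, hT₀sq x]
    rw [real_inner_self_eq_norm_sq, real_inner_self_eq_norm_sq] at h1
    nlinarith [norm_nonneg (T₀ x), norm_nonneg x]
  set b := hL.eigenvectorBasis with hbdef
  set μ := hL.eigenvalues with hμdef
  have hb : ∀ i, T (b i) = μ i • b i := by
    intro i
    have h := hL.mulVec_eigenvectorBasis i
    apply (WithLp.equiv 2 (m → ℝ)).injective
    simpa [Matrix.toEuclideanLin_apply, hTdef] using h
  have hrepr : ∀ (x : EuclideanSpace ℝ m) (i : m), b.repr (T x) i = μ i * b.repr x i := by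
    intro x i
    rw [b.repr_apply_apply, b.repr_apply_apply, ← hTsym (b i) x]
    show ⟪T (b i), x⟫ = _
    rw [hb i, real_inner_smul_left]
  have hinner : ∀ x : EuclideanSpace ℝ m, ⟪x, T x⟫ = ∑ i, μ i * (b.repr x i) ^ 2 := by
    intro x
    rw [← b.repr.inner_map_map x (T x), PiLp.inner_apply]
    refine Finset.sum_congr rfl fun i _ => ?_
    rw [hrepr]
    simp [RCLike.inner_apply, starRingEnd_apply]
    ring
  -- eigenvalue lower bound
  have hmu : ∀ i, 1 - ε ≤ |μ i| := by
    intro i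
    have hv : ‖b i‖ = 1 := b.orthonormal.1 i
    have h0 : T₀ (b i) = T (b i) - TE (b i) := by rw [hT (b i)]; abel
    have h1 : (1 : ℝ) = ‖T₀ (b i)‖ := by rw [hT₀norm, hv]
    have h2 : ‖T₀ (b i)‖ ≤ ‖T (b i)‖ + ‖TE (b i)‖ := by
      rw [h0]; exact norm_sub_le _ _
    have h3 : ‖T (b i)‖ = |μ i| := by rw [hb i, norm_smul, hv, Real.norm_eq_abs, mul_one]
    have h4 : ‖TE (b i)‖ ≤ ε := by simpa [hv] using hE (b i)
    linarith
  have hmu0 : ∀ i, μ i ≠ 0 := by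
    intro i h
    have := hmu i
    rw [h, abs_zero] at this
    linarith
  have hUnit : IsUnit L := by
    rw [Matrix.isUnit_iff_isUnit_det, isUnit_iff_ne_zero]
    have hdet : L.det = ∏ i, μ i := by
      simpa using hL.det_eq_prod_eigenvalues
    rw [hdet]
    exact Finset.prod_ne_zero_iff.mpr fun i _ => hmu0 i
  -- submodules
  set Kp : Submodule ℝ (EuclideanSpace ℝ m) := LinearMap.ker (T₀ - LinearMap.id) with hKpdef
  set Kn : Submodule ℝ (EuclideanSpace ℝ m) := LinearMap.ker (T₀ + LinearMap.id) with hKndef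
  have hKpmem : ∀ x, x ∈ Kp ↔ T₀ x = x := by
    intro x
    rw [hKpdef, LinearMap.mem_ker, LinearMap.sub_apply, LinearMap.id_apply, sub_eq_zero]
  have hKnmem : ∀ x, x ∈ Kn ↔ T₀ x = -x := by
    intro x
    rw [hKndef, LinearMap.mem_ker, LinearMap.add_apply, LinearMap.id_apply, add_eq_zero_iff_eq_neg]
  have hdisjK : Disjoint Kp Kn := by
    rw [Submodule.disjoint_def]
    intro x hx1 hx2
    have h1 := (hKpmem x).1 hx1
    have h2 := (hKnmem x).1 hx2
    have h3 : x = -x := h1.symm.trans h2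
    have h4 : x + x = 0 := by nth_rewrite 2 [h3]; exact add_neg_cancel x
    have h5 : (2 : ℝ) • x = 0 := by rw [two_smul]; exact h4
    exact (smul_eq_zero.mp h5).resolve_left two_ne_zero
  have hsupK : Kp ⊔ Kn = ⊤ := by
    rw [eq_top_iff]
    intro x _
    have h1 : ((1 : ℝ)/2) • (x + T₀ x) ∈ Kp := by
      refine Submodule.smul_mem _ _ ?_
      rw [hKpmem, map_add, hT₀sq, add_comm]
    have h2 : ((1 : ℝ)/2) • (x - T₀ x) ∈ Kn := by
      refine Submodule.smul_mem _ _ ?_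
      rw [hKnmem, map_sub, hT₀sq, neg_sub]
    have : x = ((1 : ℝ)/2) • (x + T₀ x) + ((1 : ℝ)/2) • (x - T₀ x) := by
      rw [smul_add, smul_sub]; module
    rw [this]
    exact Submodule.add_mem_sup h1 h2
  have hdimK : finrank ℝ Kp + finrank ℝ Kn = Fintype.card m := by
    have := Submodule.finrank_sup_add_finrank_inf_eq Kp Kn
    rw [hsupK, hdisjK.eq_bot, finrank_bot, finrank_top, finrank_euclideanSpace] at this
    omega
  -- J gives equality of dimensions
  set TJ : EuclideanSpace ℝ m →ₗ[ℝ] EuclideanSpace ℝ m := Matrix.toEuclideanLin J with hTJdef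
  have hTJsq : ∀ x, TJ (TJ x) = x := by
    intro x
    show Matrix.toEuclideanLin J (Matrix.toEuclideanLin J x) = x
    simp only [Matrix.toEuclideanLin_apply, Equiv.apply_symm_apply, Matrix.mulVec_mulVec, hJ,
      Matrix.one_mulVec, Equiv.symm_apply_apply]
  have hanti : ∀ x, TJ (T₀ x) = -(T₀ (TJ x)) := by
    intro x
    show Matrix.toEuclideanLin J (Matrix.toEuclideanLin L₀ x)
      = -(Matrix.toEuclideanLin L₀ (Matrix.toEuclideanLin J x))
    simp only [Matrix.toEuclideanLin_apply, Equiv.apply_symm_apply, Matrix.mulVec_mulVec]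
    have h5 : (J * L₀) *ᵥ ((WithLp.equiv 2 (m → ℝ)) x)
        = -((L₀ * J) *ᵥ ((WithLp.equiv 2 (m → ℝ)) x)) := by
      rw [hJa, Matrix.neg_mulVec]
    rw [show (J * L₀) *ᵥ x.ofLp = -((L₀ * J) *ᵥ x.ofLp) from h5]
    rfl
  set eJ : EuclideanSpace ℝ m ≃ₗ[ℝ] EuclideanSpace ℝ m :=
    LinearEquiv.ofLinear TJ TJ (LinearMap.ext hTJsq) (LinearMap.ext hTJsq) with heJdef
  have heJ : ∀ x, eJ x = TJ x := fun _ => rfl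
  have hmapPN : Submodule.map (eJ : EuclideanSpace ℝ m →ₗ[ℝ] EuclideanSpace ℝ m) Kp ≤ Kn := by
    rintro y ⟨x, hx, rfl⟩
    rw [hKnmem, LinearEquiv.coe_coe, heJ]
    have h1 := (hKpmem x).1 hx
    have h2 := hanti x
    rw [h1] at h2
    refine eq_neg_of_add_eq_zero_left ?_
    nth_rewrite 2 [h2]
    exact add_neg_cancel _
  have hmapNP : Submodule.map (eJ : EuclideanSpace ℝ m →ₗ[ℝ] EuclideanSpace ℝ m) Kn ≤ Kp := by
    rintro y ⟨x, hx, rfl⟩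
    rw [hKpmem, LinearEquiv.coe_coe, heJ]
    have h1 := (hKnmem x).1 hx
    have h2 := hanti x
    rw [h1, map_neg] at h2
    exact (neg_injective h2).symm
  have hKpKn : finrank ℝ Kp = finrank ℝ Kn := by
    have h1 : finrank ℝ Kp ≤ finrank ℝ Kn := by
      rw [← LinearEquiv.finrank_map_eq eJ Kp]
      exact Submodule.finrank_mono hmapPN
    have h2 : finrank ℝ Kn ≤ finrank ℝ Kp := by
      rw [← LinearEquiv.finrank_map_eq eJ Kn]
      exact Submodule.finrank_mono hmapNP
    omega
  -- spans of positive/negative eigenvectors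
  have spanCard : ∀ s : Set m, DecidablePred (· ∈ s) →
      finrank ℝ (Submodule.span ℝ (b '' s)) = (Finset.univ.filter (· ∈ s)).card := by
    intro s _
    have li : LinearIndependent ℝ (fun i : s => b i) :=
      b.orthonormal.linearIndependent.comp Subtype.val Subtype.val_injective
    have hr : Set.range (fun i : s => b i) = b '' s := by
      ext y; simp
    rw [← hr, finrank_span_eq_card li, ← Fintype.card_subtype]
  have hsupp : ∀ (s : Set m) (x : EuclideanSpace ℝ m), x ∈ Submodule.span ℝ (b '' s) →
      ∀ i, i ∉ s → b.repr x i = 0 := by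
    intro s x hx
    induction hx using Submodule.span_induction with
    | mem y hy =>
      obtain ⟨j, hj, rfl⟩ := hy
      intro i hi
      rw [b.repr_self]
      have hij : i ≠ j := fun h => hi (h ▸ hj)
      rw [EuclideanSpace.single_apply, if_neg hij]
    | zero => intro i _; simp
    | add y z hy hz ihy ihz => intro i hi; rw [map_add]; simp [ihy i hi, ihz i hi]
    | smul a y hy ihy => intro i hi; rw [_root_.map_smul]; simp [ihy i hi]
  -- quadratic form signs
  have hposP : ∀ x ∈ Submodule.span ℝ (b '' {i | 0 < μ i}), x ≠ 0 → 0 < ⟪x, T x⟫ := by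
    intro x hx hx0
    rw [hinner]
    have hnn : ∀ i ∈ Finset.univ, (0 : ℝ) ≤ μ i * (b.repr x i) ^ 2 := by
      intro i _
      by_cases h : 0 < μ i
      · positivity
      · rw [hsupp _ x hx i h]; simp
    obtain ⟨i, hi⟩ : ∃ i, b.repr x i ≠ 0 := by
      by_contra h
      push_neg at h
      exact hx0 (b.repr.map_eq_zero_iff.1 (by ext i; simpa using h i))
    have hiμ : 0 < μ i := by
      by_contra h
      exact hi (hsupp _ x hx i h)
    refine Finset.sum_pos' hnn ⟨i, Finset.mem_univ i, ?_⟩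
    positivity
  have hnegN : ∀ x ∈ Submodule.span ℝ (b '' {i | μ i < 0}), x ≠ 0 → ⟪x, T x⟫ < 0 := by
    intro x hx hx0
    rw [hinner]
    have hnp : ∀ i ∈ Finset.univ, μ i * (b.repr x i) ^ 2 ≤ 0 := by
      intro i _
      by_cases h : μ i < 0
      · nlinarith [sq_nonneg (b.repr x i)]
      · rw [hsupp _ x hx i h]; simp
    obtain ⟨i, hi⟩ : ∃ i, b.repr x i ≠ 0 := by
      by_contra h
      push_neg at h
      exact hx0 (b.repr.map_eq_zero_iff.1 (by ext i; simpa using h i))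
    have hiμ : μ i < 0 := by
      by_contra h
      exact hi (hsupp _ x hx i h)
    have : μ i * (b.repr x i) ^ 2 < 0 := by
      have hsq : 0 < (b.repr x i) ^ 2 := by positivity
      nlinarith
    refine Finset.sum_neg' hnp ⟨i, Finset.mem_univ i, this⟩
  have hposKp : ∀ x ∈ Kp, x ≠ 0 → 0 < ⟪x, T x⟫ := by
    intro x hx hx0
    have h1 := (hKpmem x).1 hx
    have h2 : ⟪x, T x⟫ = ‖x‖ ^ 2 + ⟪x, TE x⟫ := by
      rw [hT x, inner_add_right, h1, real_inner_self_eq_norm_sq]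
    have h3 : |⟪x, TE x⟫| ≤ ε * ‖x‖ ^ 2 := by
      refine le_trans (abs_real_inner_le_norm _ _) ?_
      have := hE x
      nlinarith [norm_nonneg x]
    have h4 : 0 < ‖x‖ := norm_pos_iff.mpr hx0
    have h5 := abs_le.1 h3
    rw [h2]
    nlinarith [h5.1, pow_pos h4 2]
  have hnegKn : ∀ x ∈ Kn, x ≠ 0 → ⟪x, T x⟫ < 0 := by
    intro x hx hx0
    have h1 := (hKnmem x).1 hx
    have h2 : ⟪x, T x⟫ = -‖x‖ ^ 2 + ⟪x, TE x⟫ := by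
      rw [hT x, inner_add_right, h1, inner_neg_right, real_inner_self_eq_norm_sq]
    have h3 : |⟪x, TE x⟫| ≤ ε * ‖x‖ ^ 2 := by
      refine le_trans (abs_real_inner_le_norm _ _) ?_
      have := hE x
      nlinarith [norm_nonneg x]
    have h4 : 0 < ‖x‖ := norm_pos_iff.mpr hx0
    have h5 := abs_le.1 h3
    rw [h2]
    nlinarith [h5.2, pow_pos h4 2]
  -- disjointness and counting
  have hdisj1 : Disjoint (Submodule.span ℝ (b '' {i | 0 < μ i})) Kn := by
    rw [Submodule.disjoint_def]
    intro x hx1 hx2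
    by_contra hx0
    exact absurd (hposP x hx1 hx0) (not_lt.mpr (le_of_lt (hnegKn x hx2 hx0)))
  have hdisj2 : Disjoint (Submodule.span ℝ (b '' {i | μ i < 0})) Kp := by
    rw [Submodule.disjoint_def]
    intro x hx1 hx2
    by_contra hx0
    exact absurd (hposKp x hx2 hx0) (not_lt.mpr (le_of_lt (hnegN x hx1 hx0)))
  have hc1 : finrank ℝ (Submodule.span ℝ (b '' {i | 0 < μ i})) + finrank ℝ Kn
      ≤ Fintype.card m := by
    have := Submodule.finrank_add_finrank_le_of_disjoint hdisj1
    rwa [finrank_euclideanSpace] at this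
  have hc2 : finrank ℝ (Submodule.span ℝ (b '' {i | μ i < 0})) + finrank ℝ Kp
      ≤ Fintype.card m := by
    have := Submodule.finrank_add_finrank_le_of_disjoint hdisj2
    rwa [finrank_euclideanSpace] at this
  have hs1 : finrank ℝ (Submodule.span ℝ (b '' {i | 0 < μ i}))
      = (Finset.univ.filter fun i => 0 < μ i).card := spanCard _ (fun i => by
        simp only [Set.mem_setOf_eq]; infer_instance)
  have hs2 : finrank ℝ (Submodule.span ℝ (b '' {i | μ i < 0}))
      = (Finset.univ.filter fun i => μ i < 0).card := spanCard _ (fun i => by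
        simp only [Set.mem_setOf_eq]; infer_instance)
  have hcount : (Finset.univ.filter fun i => 0 < μ i).card
      + (Finset.univ.filter fun i => μ i < 0).card = Fintype.card m := by
    have heq : (Finset.univ.filter fun i => μ i < 0)
        = (Finset.univ.filter fun i => ¬ 0 < μ i) := by
      refine Finset.filter_congr fun i _ => ?_
      constructor
      · intro h; exact not_lt.mpr (le_of_lt h)
      · intro h; rcases lt_trichotomy (μ i) 0 with h' | h' | h'
        · exact h'
        · exact absurd h' (hmu0 i)
        · exact absurd h' h
    rw [heq, Finset.card_filter_add_card_filter_not, Finset.card_univ]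
  have hfinal : (Finset.univ.filter fun i => 0 < μ i).card
      = (Finset.univ.filter fun i => μ i < 0).card := by
    rw [hs1] at hc1
    rw [hs2] at hc2
    omega
  refine ⟨hUnit, ?_⟩
  rw [matSign, dif_pos hL]
  rw [← hμdef] at *
  omega

end AuxSetup

section MainAux
set_option maxHeartbeats 1000000
open Matrix Finset Module

variable (n : ℕ)

lemma sympMat_transpose : (sympMat n)ᵀ = -(sympMat n) := by
  rw [sympMat, Matrix.fromBlocks_transpose]
  simp [Matrix.fromBlocks_neg]

lemma sympMat_sq : sympMat n * sympMat n = -1 := by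
  rw [sympMat, Matrix.fromBlocks_multiply]
  simp [← Matrix.fromBlocks_one, Matrix.fromBlocks_neg]

lemma main_step (A : Matrix (Fin n ⊕ Fin n) (Fin n ⊕ Fin n) ℝ) (hA : A.IsSymm) (k : ℕ)
    (hk : (∑ i, ∑ j, |(Matrix.fromBlocks A 0 0 A :
        Matrix ((Fin n ⊕ Fin n) ⊕ (Fin n ⊕ Fin n)) ((Fin n ⊕ Fin n) ⊕ (Fin n ⊕ Fin n)) ℝ) i j|)
      < (k : ℝ)) (hk1 : 1 ≤ k) :
    IsUnit (LkMat n A k) ∧ matSign (LkMat n A k) = 0 := by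
  classical
  set mm := (Fin n ⊕ Fin n) ⊕ (Fin n ⊕ Fin n)
  set S := sympMat n with hSdef
  set E₀ : Matrix mm mm ℝ := Matrix.fromBlocks A 0 0 A with hE₀def
  set C : ℝ := ∑ i, ∑ j, |E₀ i j| with hCdef
  have hC0 : 0 ≤ C := Finset.sum_nonneg fun i _ => Finset.sum_nonneg fun j _ => abs_nonneg _
  have hkpos : (0 : ℝ) < k := lt_of_le_of_lt hC0 hk
  set L₀ : Matrix mm mm ℝ := Matrix.fromBlocks 0 S (-S) 0 with hL₀def
  set E : Matrix mm mm ℝ := (1 / (k : ℝ)) • E₀ with hEdef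
  set J : Matrix mm mm ℝ := Matrix.fromBlocks 1 0 0 (-1) with hJdef
  have hsum : LkMat n A k = L₀ + E := by
    rw [LkMat, hL₀def, hEdef, hE₀def, Matrix.fromBlocks_smul, Matrix.fromBlocks_add]
    simp
    rfl
  have hST : Sᵀ = -S := sympMat_transpose n
  have hL : (LkMat n A k).IsHermitian := by
    show _ᴴ = _
    rw [Matrix.conjTranspose_eq_transpose_of_trivial, LkMat, Matrix.fromBlocks_transpose,
      Matrix.transpose_neg, hST, neg_neg, Matrix.transpose_smul, hA]
  have hL₀ : L₀.IsHermitian := by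
    show _ᴴ = _
    rw [Matrix.conjTranspose_eq_transpose_of_trivial, hL₀def, Matrix.fromBlocks_transpose,
      Matrix.transpose_neg, hST, neg_neg, Matrix.transpose_zero]
  have hSS : S * S = -1 := sympMat_sq n
  have hL₀sq : L₀ * L₀ = 1 := by
    rw [hL₀def, Matrix.fromBlocks_multiply]
    simp [hSS, Matrix.fromBlocks_one]
  have hJ : J * J = 1 := by
    rw [hJdef, Matrix.fromBlocks_multiply]
    simp [Matrix.fromBlocks_one]
  have hJa : J * L₀ = -(L₀ * J) := by
    rw [hJdef, hL₀def, Matrix.fromBlocks_multiply, Matrix.fromBlocks_multiply]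
    rw [Matrix.fromBlocks_neg]
    simp
  have hε : C / (k : ℝ) < 1 := (div_lt_one hkpos).2 hk
  have hE : ∀ x : EuclideanSpace ℝ mm, ‖Matrix.toEuclideanLin E x‖ ≤ (C / (k : ℝ)) * ‖x‖ := by
    intro x
    refine le_trans (opBound E x) ?_
    have hsumE : (∑ i, ∑ j, |E i j|) = C / (k : ℝ) := by
      have h1 : ∀ i j, |E i j| = (1 / (k : ℝ)) * |E₀ i j| := by
        intro i j
        rw [hEdef, Matrix.smul_apply, smul_eq_mul, abs_mul, abs_of_nonneg (by positivity)]
      simp only [h1, ← Finset.mul_sum]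
      rw [← hCdef]
      ring
    rw [hsumE]
  exact key_lemma (LkMat n A k) L₀ E J hsum hL hL₀ hL₀sq hJ hJa hε hE

end MainAux

/-- **Well-definedness of the index `i(A)`.**  For every real symmetric `2n×2n` matrix `A`
there is `K` such that for all `k ≥ K` the matrix `L^k(A)` is invertible with vanishing
signature; in particular only finitely many terms of the sum defining `i(A)` are nonzero. -/
theorem hamIndex_well_defined (n : ℕ) (A : Matrix (Fin n ⊕ Fin n) (Fin n ⊕ Fin n) ℝ)
    (hA : A.IsSymm) :
    ∃ K : ℕ, 1 ≤ K ∧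
      (∀ k : ℕ, K ≤ k → IsUnit (LkMat n A k) ∧ matSign (LkMat n A k) = 0) ∧
      {k : ℕ | 1 ≤ k ∧ matSign (LkMat n A k) ≠ 0}.Finite := by
  classical
  set C : ℝ := ∑ i, ∑ j, |(Matrix.fromBlocks A 0 0 A :
      Matrix ((Fin n ⊕ Fin n) ⊕ (Fin n ⊕ Fin n)) ((Fin n ⊕ Fin n) ⊕ (Fin n ⊕ Fin n)) ℝ) i j|
    with hCdef
  set K : ℕ := ⌈C⌉₊ + 1 with hKdef
  have hmain : ∀ k : ℕ, K ≤ k → IsUnit (LkMat n A k) ∧ matSign (LkMat n A k) = 0 := by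
    intro k hk
    have hk1 : 1 ≤ k := le_trans (by omega) hk
    have hCk : C < (k : ℝ) := by
      calc C ≤ (⌈C⌉₊ : ℝ) := Nat.le_ceil C
      _ < (K : ℝ) := by rw [hKdef]; push_cast; linarith
      _ ≤ (k : ℝ) := by exact_mod_cast hk
    exact main_step n A hA k hCk hk1
  refine ⟨K, by omega, hmain, ?_⟩
  refine Set.Finite.subset (Set.finite_Iio K) ?_
  intro k hk
  simp only [Set.mem_setOf_eq] at hk
  by_contra h
  simp only [Set.mem_Iio, not_lt] at h
  exact hk.2 (hmain k h).2
end

section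
/- Let H = H⁺ ⊕ H⁻ be an orthogonal decomposition of a real separable Hilbert space into two infinite-dimensional subspaces, J the self-adjoint involution equal to Id on H⁺ and −Id on H⁻, {e_k^+} and {e_k^-} orthonormal bases of H⁺ and H⁻, H_n the span of {e_k^± : 1 ≤ k ≤ n}, and P_n the orthogonal projection onto H_n. Let I = [a,b] and ψ : I × U → ℝ be a continuous family of C^2 functionals with ∇ψ_λ(0) = 0 for all λ, whose Hessians at 0 have the form L_λ = J + K_λ with K_λ compact self-adjoint, and with L_a and L_b invertible. Suppose n₀ is such that for all n ≥ n₀: (Id − P_n)L_λ restricted to H_n^⊥ is an invertible operator on H_n^⊥ for every λ ∈ I, and L^n_i := P_n L_i|_{H_n} : H_n → H_n is invertible for i ∈ {a,b}; for n ≥ n₀ let ψ̄^n be the Lyapunov–Schmidt reduction of ψ with respect to the splitting H = H_n ⊕ H_n^⊥, defined on I × B for a ball B ⊂ H_n around 0, and let l^n_i denote the Hessian of ψ̄^n_i at 0 for i ∈ {a,b}. Then for all sufficiently large n and i ∈ {a,b}, 0 is a non-degenerate critical point of ψ̄^n_i (i.e., l^n_i is invertible) and μ(l^n_i) = μ(L^n_i).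 -/
open Set Metric Module

/-- The Morse index of a self-adjoint operator: the maximal dimension of a subspace on which
the associated quadratic form is negative definite. -/
noncomputable def morseIndex {E : Type*} [NormedAddCommGroup E] [InnerProductSpace ℝ E]
    (T : E →L[ℝ] E) : ℕ :=
  sSup {k : ℕ | ∃ W : Submodule ℝ E, Module.finrank ℝ W = k ∧
    ∀ x ∈ W, x ≠ 0 → (inner ℝ (T x) x : ℝ) < 0}

section AuxFiniteDim
variable {E : Type*} [NormedAddCommGroup E] [InnerProductSpace ℝ E] [FiniteDimensional ℝ E]

lemma morseIndex_eq_of_subspaces (S : E →L[ℝ] E) (Wn Wp : Submodule ℝ E)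
    (h1 : ∀ x ∈ Wn, x ≠ 0 → (inner ℝ (S x) x : ℝ) < 0)
    (h2 : ∀ x ∈ Wp, 0 ≤ (inner ℝ (S x) x : ℝ))
    (hdim : Module.finrank ℝ Wn + Module.finrank ℝ Wp = Module.finrank ℝ E) :
    morseIndex S = Module.finrank ℝ Wn := by
  have hmem : Module.finrank ℝ Wn ∈ {k : ℕ | ∃ W : Submodule ℝ E, Module.finrank ℝ W = k ∧
      ∀ x ∈ W, x ≠ 0 → (inner ℝ (S x) x : ℝ) < 0} := ⟨Wn, rfl, h1⟩
  have hub : ∀ k ∈ {k : ℕ | ∃ W : Submodule ℝ E, Module.finrank ℝ W = k ∧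
      ∀ x ∈ W, x ≠ 0 → (inner ℝ (S x) x : ℝ) < 0}, k ≤ Module.finrank ℝ Wn := by
    rintro k ⟨W, rfl, hW⟩
    have hbot : W ⊓ Wp = ⊥ := by
      rw [Submodule.eq_bot_iff]
      intro x hx
      by_contra hne
      exact absurd (h2 x hx.2) (not_le.mpr (hW x hx.1 hne))
    have := Submodule.finrank_sup_add_finrank_inf_eq W Wp
    rw [hbot, finrank_bot, add_zero] at this
    have hle : Module.finrank ℝ ↥(W ⊔ Wp) ≤ Module.finrank ℝ E := Submodule.finrank_le _
    omega
  exact le_antisymm (csSup_le ⟨_, hmem⟩ hub) (le_csSup ⟨_, hub⟩ hmem)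


lemma exists_definite_subspaces (S : E →L[ℝ] E) (hsym : ∀ x y : E, (inner ℝ (S x) y : ℝ) = inner ℝ x (S y))
    (c : ℝ) (hc : 0 < c) (hlow : ∀ x, c * ‖x‖ ≤ ‖S x‖) :
    ∃ Wn Wp : Submodule ℝ E,
      (∀ x ∈ Wn, (inner ℝ (S x) x : ℝ) ≤ -c * ‖x‖ ^ 2) ∧
      (∀ x ∈ Wp, c * ‖x‖ ^ 2 ≤ (inner ℝ (S x) x : ℝ)) ∧
      finrank ℝ Wn + finrank ℝ Wp = finrank ℝ E := by
  classical
  have hsym' : (S : E →ₗ[ℝ] E).IsSymmetric := by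
    intro x y; exact hsym x y
  set d := finrank ℝ E with hd
  have hdd : finrank ℝ E = d := rfl
  set b := hsym'.eigenvectorBasis hdd with hb
  set μ := hsym'.eigenvalues hdd with hμ
  have happly : ∀ i, S (b i) = μ i • b i := fun i => by
    have := hsym'.apply_eigenvectorBasis hdd i
    exact_mod_cast this
  have hnorm1 : ∀ i, ‖b i‖ = 1 := fun i => b.orthonormal.1 i
  have habs : ∀ i, c ≤ |μ i| := by
    intro i
    have h1 : ‖S (b i)‖ = |μ i| := by
      rw [happly i, norm_smul, hnorm1 i, Real.norm_eq_abs, mul_one]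
    have := hlow (b i)
    rwa [hnorm1 i, mul_one, h1] at this
  -- coefficient formulas
  have hrepr : ∀ x i, b.repr x i = inner ℝ (b i) x := fun x i => b.repr_apply_apply x i
  have hquad : ∀ x : E, (inner ℝ (S x) x : ℝ) = ∑ i, μ i * (b.repr x i) ^ 2 := by
    intro x
    have h1 : (inner ℝ (S x) x : ℝ) = inner ℝ (b.repr (S x)) (b.repr x) :=
      (b.repr.inner_map_map (S x) x).symm
    rw [h1]
    rw [PiLp.inner_apply]
    apply Finset.sum_congr rfl
    intro i _
    have h2 : b.repr (S x) i = μ i * b.repr x i := by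
      simpa using hsym'.eigenvectorBasis_apply_self_apply hdd x i
    simp [h2, RCLike.inner_apply]
    ring
  have hnormsq : ∀ x : E, ‖x‖ ^ 2 = ∑ i, (b.repr x i) ^ 2 := by
    intro x
    have h1 : (inner ℝ x x : ℝ) = inner ℝ (b.repr x) (b.repr x) := (b.repr.inner_map_map x x).symm
    rw [← real_inner_self_eq_norm_sq, h1, PiLp.inner_apply]
    apply Finset.sum_congr rfl
    intro i _
    simp [RCLike.inner_apply]
  -- vanishing coefficients on spans
  have hvanish : ∀ (s : Set (Fin d)) (x : E), x ∈ Submodule.span ℝ (b '' s) →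
      ∀ i ∉ s, b.repr x i = 0 := by
    intro s x hx i his
    have hle : Submodule.span ℝ (b '' s) ≤ LinearMap.ker ((innerSL ℝ (b i)).toLinearMap) := by
      rw [Submodule.span_le]
      rintro y ⟨j, hjs, rfl⟩
      have hij : i ≠ j := fun h => his (h ▸ hjs)
      simp [LinearMap.mem_ker, innerSL_apply_apply, b.orthonormal.2 hij]
    have := hle hx
    rw [hrepr]
    simpa [LinearMap.mem_ker] using this
  set sneg : Set (Fin d) := {i | μ i < 0} with hsneg
  refine ⟨Submodule.span ℝ (b '' sneg), Submodule.span ℝ (b '' snegᶜ), ?_, ?_, ?_⟩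
  · intro x hx
    rw [hquad, hnormsq, Finset.mul_sum]
    apply Finset.sum_le_sum
    intro i _
    by_cases his : i ∈ sneg
    · have h1 : μ i ≤ -c := by
        have := habs i
        have h2 : μ i < 0 := his
        cases abs_cases (μ i) with
        | inl h => linarith [h.1]
        | inr h => linarith [h.1]
      nlinarith [sq_nonneg (b.repr x i)]
    · rw [hvanish sneg x hx i his]; ring_nf; rfl
  · intro x hx
    rw [hquad, hnormsq, Finset.mul_sum]
    apply Finset.sum_le_sum
    intro i _
    by_cases his : i ∈ snegᶜ
    · have h1 : c ≤ μ i := by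
        have := habs i
        have h2 : ¬ μ i < 0 := his
        cases abs_cases (μ i) with
        | inl h => linarith [h.1]
        | inr h => linarith
      nlinarith [sq_nonneg (b.repr x i)]
    · rw [hvanish snegᶜ x hx i his]; ring_nf; rfl
  · -- dimensions
    have hdim : ∀ s : Set (Fin d), finrank ℝ (Submodule.span ℝ (b '' s)) = s.toFinset.card := by
      intro s
      have ho : Orthonormal ℝ (fun i : s => b i) := b.orthonormal.comp _ Subtype.val_injective
      have hli := ho.linearIndependent
      have hrange : Set.range (fun i : s => b i) = b '' s := by
        rw [← Set.image_eq_range]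
      rw [← hrange, finrank_span_eq_card hli, ← Set.toFinset_card]
    rw [hdim, hdim]
    simp only [Set.toFinset_compl]
    rw [Finset.card_add_card_compl, Fintype.card_fin]


lemma morse_stability (S S' : E →L[ℝ] E)
    (hsym : ∀ x y : E, (inner ℝ (S x) y : ℝ) = inner ℝ x (S y))
    (c : ℝ) (hc : 0 < c) (hlow : ∀ x, c * ‖x‖ ≤ ‖S x‖)
    (hnear : ∀ x, ‖S' x - S x‖ ≤ c / 2 * ‖x‖) :
    Function.Bijective S' ∧ morseIndex S' = morseIndex S := by
  obtain ⟨Wn, Wp, hWn, hWp, hdim⟩ := exists_definite_subspaces S hsym c hc hlow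
  have hinj : Function.Injective S' := by
    intro x y hxy
    have h0 : S' (x - y) = 0 := by rw [map_sub, hxy, sub_self]
    by_contra hne
    have hne' : x - y ≠ 0 := sub_ne_zero.mpr hne
    have h1 := hnear (x - y)
    rw [h0, zero_sub, norm_neg] at h1
    have h2 := hlow (x - y)
    have h3 : 0 < ‖x - y‖ := norm_pos_iff.mpr hne'
    nlinarith
  have hbij : Function.Bijective S' := by
    refine ⟨hinj, ?_⟩
    have := (LinearMap.injective_iff_surjective (f := (S' : E →ₗ[ℝ] E))).mp hinj
    exact this
  refine ⟨hbij, ?_⟩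
  have hS'n : ∀ x ∈ Wn, x ≠ 0 → (inner ℝ (S' x) x : ℝ) < 0 := by
    intro x hx hne
    have h1 := hWn x hx
    have h2 : (inner ℝ (S' x) x : ℝ) = inner ℝ (S x) x + inner ℝ (S' x - S x) x := by
      rw [← inner_add_left]; congr 1; abel
    have h3 : (inner ℝ (S' x - S x) x : ℝ) ≤ c / 2 * ‖x‖ * ‖x‖ :=
      le_trans (real_inner_le_norm _ _) (by
        have := hnear x
        have h4 : (0:ℝ) ≤ ‖x‖ := norm_nonneg x
        nlinarith)
    have h5 : 0 < ‖x‖ := norm_pos_iff.mpr hne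
    nlinarith [mul_pos hc (mul_pos h5 h5), pow_two ‖x‖]
  have hS'p : ∀ x ∈ Wp, 0 ≤ (inner ℝ (S' x) x : ℝ) := by
    intro x hx
    have h1 := hWp x hx
    have h2 : (inner ℝ (S' x) x : ℝ) = inner ℝ (S x) x + inner ℝ (S' x - S x) x := by
      rw [← inner_add_left]; congr 1; abel
    have h3 : -(c / 2 * ‖x‖ * ‖x‖) ≤ (inner ℝ (S' x - S x) x : ℝ) := by
      have habs := abs_real_inner_le_norm (S' x - S x) x
      have h6 := mul_le_mul_of_nonneg_right (hnear x) (norm_nonneg x)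
      nlinarith [neg_abs_le (inner ℝ (S' x - S x) x : ℝ)]
    nlinarith [mul_nonneg hc.le (mul_nonneg (norm_nonneg x) (norm_nonneg x)), pow_two ‖x‖]
  have hSn : ∀ x ∈ Wn, x ≠ 0 → (inner ℝ (S x) x : ℝ) < 0 := by
    intro x hx hne
    have h1 := hWn x hx
    have h5 : 0 < ‖x‖ := norm_pos_iff.mpr hne
    nlinarith [mul_pos hc (mul_pos h5 h5), pow_two ‖x‖]
  have hSp : ∀ x ∈ Wp, 0 ≤ (inner ℝ (S x) x : ℝ) := by
    intro x hx
    have h1 := hWp x hx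
    nlinarith [mul_nonneg hc.le (sq_nonneg ‖x‖)]
  rw [morseIndex_eq_of_subspaces S' Wn Wp hS'n hS'p hdim,
    morseIndex_eq_of_subspaces S Wn Wp hSn hSp hdim]

end AuxFiniteDim

section AuxHilbert
variable {H : Type*} [NormedAddCommGroup H] [InnerProductSpace ℝ H] [CompleteSpace H]


lemma norm_sub_proj_le (K' : Submodule ℝ H) [CompleteSpace K'] (x y : H) (hy : y ∈ K') :
    ‖x - (K'.subtypeL ∘L Submodule.orthogonalProjectionOnto K') x‖ ≤ ‖x - y‖ := by
  set a := x - (K'.subtypeL ∘L Submodule.orthogonalProjectionOnto K') x with ha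
  have hao : a ∈ K'ᗮ := Submodule.sub_starProjection_mem_orthogonal x
  set bb := ((K'.subtypeL ∘L Submodule.orthogonalProjectionOnto K') x : H) - y with hbb
  have hbm : bb ∈ K' := K'.sub_mem (SetLike.coe_mem _) hy
  have hxy : x - y = a + bb := by rw [ha, hbb]; abel
  have hinner : (inner ℝ a bb : ℝ) = 0 := by
    rw [real_inner_comm]; exact Submodule.inner_right_of_mem_orthogonal hbm hao
  have hsq : ‖x - y‖ ^ 2 = ‖a‖ ^ 2 + ‖bb‖ ^ 2 := by
    rw [hxy, norm_add_sq_real, hinner]; ring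
  nlinarith [norm_nonneg a, norm_nonneg (x - y), norm_nonneg bb]

lemma norm_proj_le' (K' : Submodule ℝ H) [CompleteSpace K'] (x : H) :
    ‖((K'.subtypeL ∘L Submodule.orthogonalProjectionOnto K') x : H)‖ ≤ ‖x‖ := by
  have h := norm_sub_proj_le K' x 0 K'.zero_mem
  rw [sub_zero] at h
  have hsq : ‖x‖ ^ 2 = ‖((K'.subtypeL ∘L Submodule.orthogonalProjectionOnto K') x : H)‖ ^ 2
      + ‖x - (K'.subtypeL ∘L Submodule.orthogonalProjectionOnto K') x‖ ^ 2 := by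
    have hao : x - (K'.subtypeL ∘L Submodule.orthogonalProjectionOnto K') x ∈ K'ᗮ :=
      Submodule.sub_starProjection_mem_orthogonal x
    have hbm : ((K'.subtypeL ∘L Submodule.orthogonalProjectionOnto K') x : H) ∈ K' := SetLike.coe_mem _
    have hinner : (inner ℝ ((K'.subtypeL ∘L Submodule.orthogonalProjectionOnto K') x : H)
        (x - (K'.subtypeL ∘L Submodule.orthogonalProjectionOnto K') x) : ℝ) = 0 :=
      Submodule.inner_right_of_mem_orthogonal hbm hao
    calc ‖x‖ ^ 2 = ‖((K'.subtypeL ∘L Submodule.orthogonalProjectionOnto K') x : H)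
          + (x - (K'.subtypeL ∘L Submodule.orthogonalProjectionOnto K') x)‖ ^ 2 := by rw [add_sub_cancel]
      _ = _ := by rw [norm_add_sq_real, hinner]; ring
  nlinarith [norm_nonneg x, norm_nonneg ((K'.subtypeL ∘L Submodule.orthogonalProjectionOnto K') x : H)]

lemma compact_proj_norm (T : H →L[ℝ] H) (hT : IsCompactOperator T)
    (R : ℕ → H →L[ℝ] H) (hR1 : ∀ n (z : H), ‖z - R n z‖ ≤ ‖z‖)
    (hR2 : ∀ z : H, ∀ ε > (0:ℝ), ∃ N, ∀ n ≥ N, ‖z - R n z‖ ≤ ε) :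
    ∀ ε > (0:ℝ), ∃ N, ∀ n ≥ N, ∀ z : H, ‖T z - R n (T z)‖ ≤ ε * ‖z‖ := by
  intro ε hε
  obtain ⟨C, hC, hsub⟩ :=
    (hT : IsCompactOperator (T : H →ₗ[ℝ] H)).image_closedBall_subset_compact 1
  obtain ⟨t, htfin, htcover⟩ := (Metric.totallyBounded_iff).mp hC.totallyBounded (ε/3) (by linarith)
  choose f hf using fun y : H => hR2 y (ε/3) (by linarith)
  refine ⟨htfin.toFinset.sup f, fun n hn z => ?_⟩
  by_cases hz : z = 0
  · simp [hz]
  · have hznorm : (0:ℝ) < ‖z‖ := norm_pos_iff.mpr hz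
    set u := ‖z‖⁻¹ • z with hu
    have hunorm : ‖u‖ ≤ 1 := by
      rw [hu, norm_smul, Real.norm_eq_abs, abs_inv, abs_of_nonneg (norm_nonneg z),
        inv_mul_cancel₀ hznorm.ne']
    have hTu : T u ∈ C := hsub ⟨u, by simpa [Metric.mem_closedBall, dist_eq_norm] using hunorm, rfl⟩
    obtain ⟨y, hyt, hy⟩ := Set.mem_iUnion₂.mp (htcover hTu)
    have hyn : n ≥ f y := le_trans (Finset.le_sup (htfin.mem_toFinset.mpr hyt)) hn
    have hkey : ‖T u - R n (T u)‖ ≤ ε := by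
      have hdec : T u - R n (T u) = ((T u - y) - R n (T u - y)) + (y - R n y) := by
        rw [map_sub]; abel
      calc ‖T u - R n (T u)‖ ≤ ‖(T u - y) - R n (T u - y)‖ + ‖y - R n y‖ := by
            rw [hdec]; exact norm_add_le _ _
        _ ≤ ‖T u - y‖ + ε/3 := add_le_add (hR1 n _) (hf y n hyn)
        _ ≤ ε/3 + ε/3 := by
            have : dist (T u) y < ε/3 := Metric.mem_ball.mp hy
            rw [dist_eq_norm] at this; linarith
        _ ≤ ε := by linarith
    have hzu : z = ‖z‖ • u := by rw [hu, smul_smul, mul_inv_cancel₀ hznorm.ne', one_smul]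
    have hTzu : ‖z‖ • T u = T z := by
      rw [← map_smul]; exact congrArg T hzu.symm
    have hdec2 : ‖z‖ • (T u - R n (T u)) = T z - R n (T z) := by
      rw [smul_sub, hTzu, ← map_smul, hTzu]
    rw [← hdec2, norm_smul, Real.norm_eq_abs, abs_of_nonneg (norm_nonneg z)]
    calc ‖z‖ * ‖T u - R n (T u)‖ ≤ ‖z‖ * ε := mul_le_mul_of_nonneg_left hkey (norm_nonneg z)
      _ = ε * ‖z‖ := mul_comm _ _

lemma compact_proj_norm' (T : H →L[ℝ] H) (hTsa : IsSelfAdjoint T)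
    (K' : Submodule ℝ H) [CompleteSpace K'] (ε : ℝ) (hε : 0 ≤ ε)
    (h : ∀ z : H, ‖T z - (K'.subtypeL ∘L Submodule.orthogonalProjectionOnto K') (T z)‖ ≤ ε * ‖z‖) :
    ∀ z : H, ‖T (z - (K'.subtypeL ∘L Submodule.orthogonalProjectionOnto K') z)‖ ≤ ε * ‖z‖ := by
  set R := K'.subtypeL ∘L Submodule.orthogonalProjectionOnto K' with hR
  have hRsa : IsSelfAdjoint R := isSelfAdjoint_starProjection K'
  have h1 : ‖(1 - R) ∘L T‖ ≤ ε := by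
    apply ContinuousLinearMap.opNorm_le_bound _ hε
    intro z
    simpa [ContinuousLinearMap.sub_apply] using h z
  have hsa1R : IsSelfAdjoint ((1 : H →L[ℝ] H) - R) := by
    rw [IsSelfAdjoint, star_sub, star_one, hRsa.star_eq]
  have h2 : T ∘L (1 - R) = ContinuousLinearMap.adjoint ((1 - R) ∘L T) := by
    rw [ContinuousLinearMap.adjoint_comp]
    rw [← ContinuousLinearMap.star_eq_adjoint, ← ContinuousLinearMap.star_eq_adjoint,
      hTsa.star_eq, hsa1R.star_eq]
  have h3 : ‖T ∘L (1 - R)‖ ≤ ε := by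
    rw [h2, ContinuousLinearMap.adjoint.norm_map]
    exact h1
  intro z
  calc ‖T (z - R z)‖ = ‖(T ∘L (1 - R)) z‖ := by simp [ContinuousLinearMap.sub_apply]
    _ ≤ ‖T ∘L (1 - R)‖ * ‖z‖ := ContinuousLinearMap.le_opNorm _ z
    _ ≤ ε * ‖z‖ := mul_le_mul_of_nonneg_right h3 (norm_nonneg z)




lemma mem_span_initial {e : ℕ → H} {z : H} (hz : z ∈ Submodule.span ℝ (Set.range e)) :
    ∃ m, z ∈ Submodule.span ℝ (e '' {k | k < m}) := by
  have hr : Set.range e = ⋃ m, e '' {k | k < m} := by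
    ext w
    simp only [Set.mem_range, Set.mem_iUnion, Set.mem_image, Set.mem_setOf_eq]
    constructor
    · rintro ⟨k, rfl⟩; exact ⟨k + 1, k, Nat.lt_succ_self k, rfl⟩
    · rintro ⟨m, k, _, rfl⟩; exact ⟨k, rfl⟩
  rw [hr, Submodule.span_iUnion] at hz
  have hdir : Directed (· ≤ ·) (fun m => Submodule.span ℝ (e '' {k | k < m})) := by
    apply Monotone.directed_le
    intro m₁ m₂ hm
    exact Submodule.span_mono (Set.image_mono (fun k hk => lt_of_lt_of_le hk hm))
  exact (Submodule.mem_iSup_of_directed _ hdir).mp hz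

lemma proj_strong_conv (V : Submodule ℝ H) (hVclosed : IsClosed (V : Set H))
    (ep em : ℕ → H)
    (hepdense : (Submodule.span ℝ (Set.range ep)).topologicalClosure = V)
    (hemdense : (Submodule.span ℝ (Set.range em)).topologicalClosure = Vᗮ)
    (Hn : ℕ → Submodule ℝ H)
    (hHn : ∀ n, Hn n = Submodule.span ℝ (ep '' {k | k < n} ∪ em '' {k | k < n}))
    [∀ n, FiniteDimensional ℝ (Hn n)] :
    ∀ x : H, ∀ ε > (0:ℝ), ∃ N, ∀ n ≥ N,
      ‖x - ((Hn n).subtypeL ∘L Submodule.orthogonalProjectionOnto (Hn n)) x‖ ≤ ε := by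
  haveI : CompleteSpace V := hVclosed.completeSpace_coe
  intro x ε hε
  set v : H := (Submodule.orthogonalProjectionOnto V x : H) with hv
  have hvV : v ∈ V := SetLike.coe_mem _
  set w : H := x - v with hw
  have hwV : w ∈ Vᗮ := Submodule.sub_starProjection_mem_orthogonal x
  -- approximate v
  have hvcl : v ∈ closure ((Submodule.span ℝ (Set.range ep) : Submodule ℝ H) : Set H) := by
    rw [← Submodule.topologicalClosure_coe, hepdense]; exact hvV
  obtain ⟨v', hv'mem, hv'⟩ := Metric.mem_closure_iff.mp hvcl (ε/2) (by linarith)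
  obtain ⟨m₁, hm₁⟩ := mem_span_initial hv'mem
  have hwcl : w ∈ closure ((Submodule.span ℝ (Set.range em) : Submodule ℝ H) : Set H) := by
    rw [← Submodule.topologicalClosure_coe, hemdense]; exact hwV
  obtain ⟨w', hw'mem, hw'⟩ := Metric.mem_closure_iff.mp hwcl (ε/2) (by linarith)
  obtain ⟨m₂, hm₂⟩ := mem_span_initial hw'mem
  refine ⟨max m₁ m₂, fun n hn => ?_⟩
  have hy : v' + w' ∈ Hn n := by
    rw [hHn n]
    have h1 : v' ∈ Submodule.span ℝ (ep '' {k | k < n} ∪ em '' {k | k < n}) := by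
      apply Submodule.span_mono (Set.subset_union_left)
      refine Submodule.span_mono (Set.image_mono ?_) hm₁
      intro k hk
      exact lt_of_lt_of_le hk (le_trans (le_max_left m₁ m₂) hn)
    have h2 : w' ∈ Submodule.span ℝ (ep '' {k | k < n} ∪ em '' {k | k < n}) := by
      apply Submodule.span_mono (Set.subset_union_right)
      refine Submodule.span_mono (Set.image_mono ?_) hm₂
      intro k hk
      exact lt_of_lt_of_le hk (le_trans (le_max_right m₁ m₂) hn)
    exact Submodule.add_mem _ h1 h2
  calc ‖x - ((Hn n).subtypeL ∘L Submodule.orthogonalProjectionOnto (Hn n)) x‖ ≤ ‖x - (v' + w')‖ :=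
        norm_sub_proj_le (Hn n) x (v' + w') hy
    _ = ‖(v - v') + (w - w')‖ := by rw [hw]; congr 1; abel
    _ ≤ ‖v - v'‖ + ‖w - w'‖ := norm_add_le _ _
    _ ≤ ε/2 + ε/2 := by
        rw [← dist_eq_norm, ← dist_eq_norm]
        exact add_le_add hv'.le hw'.le
    _ = ε := by ring



set_option maxHeartbeats 1000000 in
lemma key_reduction
    (J : H →L[ℝ] H)
    (hJsym : ∀ x y : H, (inner ℝ (J x) y : ℝ) = inner ℝ x (J y))
    (hJJ : ∀ x, J (J x) = x)
    (Hn : ℕ → Submodule ℝ H) [∀ n, FiniteDimensional ℝ (Hn n)]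
    (hJHn : ∀ n, ∀ x ∈ Hn n, J x ∈ Hn n)
    (U : Set H) (hUopen : IsOpen U)
    (ψl : H → ℝ) (hC2 : ContDiffOn ℝ 2 ψl U)
    (Kl : H →L[ℝ] H) (hKsa : IsSelfAdjoint Kl)
    (hHess : HasFDerivAt (fun x => gradient ψl x) (J + Kl) 0)
    (hLbij : Function.Bijective (J + Kl))
    (n₀ : ℕ)
    (δ : ℕ → ℝ) (hδ : ∀ n, n₀ ≤ n → 0 < δ n)
    (g : (n : ℕ) → Hn n → ((Hn n)ᗮ : Submodule ℝ H))
    (hg0 : ∀ n, n₀ ≤ n → g n 0 = 0)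
    (hgsol : ∀ n, n₀ ≤ n → ∀ x ∈ ball (0 : Hn n) (δ n),
      ((x : H) + (g n x : H)) ∈ U ∧
      Submodule.orthogonalProjectionOnto (Hn n)ᗮ (gradient ψl ((x : H) + (g n x : H))) = 0)
    (hgC1 : ∀ n, n₀ ≤ n → ContDiffOn ℝ 1 (g n) (ball 0 (δ n)))
    (hKn : ∀ ε > (0:ℝ), ∃ N, ∀ n ≥ N, (∀ z : H,
        ‖Kl z - ((Hn n).subtypeL ∘L Submodule.orthogonalProjectionOnto (Hn n)) (Kl z)‖ ≤ ε * ‖z‖) ∧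
        (∀ z : H, ‖Kl (z - ((Hn n).subtypeL ∘L Submodule.orthogonalProjectionOnto (Hn n)) z)‖ ≤ ε * ‖z‖)) :
    ∃ N : ℕ, n₀ ≤ N ∧ ∀ n, N ≤ n →
      Function.Bijective
        (fderiv ℝ (fun x : Hn n =>
          gradient (fun x' : Hn n => ψl ((x' : H) + (g n x' : H))) x) 0) ∧
      morseIndex
        (fderiv ℝ (fun x : Hn n =>
          gradient (fun x' : Hn n => ψl ((x' : H) + (g n x' : H))) x) 0)
      = morseIndex
        ((Submodule.orthogonalProjectionOnto (Hn n)).comp ((J + Kl).comp (Hn n).subtypeL)) := by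
  classical
  set L : H →L[ℝ] H := J + Kl with hL
  have hKsym : ∀ x y : H, (inner ℝ (Kl x) y : ℝ) = inner ℝ x (Kl y) := fun x y =>
    (ContinuousLinearMap.isSelfAdjoint_iff_isSymmetric.mp hKsa) x y
  have hLsym : ∀ x y : H, (inner ℝ (L x) y : ℝ) = inner ℝ x (L y) := by
    intro x y
    simp only [hL, ContinuousLinearMap.add_apply, inner_add_left, inner_add_right,
      hJsym, hKsym]
  have hJnorm : ∀ x : H, ‖J x‖ = ‖x‖ := by
    intro x
    have h1 : (inner ℝ (J x) (J x) : ℝ) = inner ℝ x x := by rw [hJsym, hJJ]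
    rw [real_inner_self_eq_norm_mul_norm, real_inner_self_eq_norm_mul_norm] at h1
    nlinarith [norm_nonneg (J x), norm_nonneg x]
  -- lower bound for L
  obtain ⟨c₀, hc₀, hLlow⟩ : ∃ c₀ > (0:ℝ), ∀ z : H, c₀ * ‖z‖ ≤ ‖L z‖ := by
    have hker : L.ker = ⊥ := LinearMap.ker_eq_bot.mpr hLbij.1
    have hrange : L.range = ⊤ := LinearMap.range_eq_top.mpr hLbij.2
    set e := ContinuousLinearEquiv.ofBijective L hker hrange with he
    set M := ‖(e.symm : H →L[ℝ] H)‖ + 1 with hM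
    have hMpos : (0:ℝ) < M := by positivity
    refine ⟨M⁻¹, by positivity, fun z => ?_⟩
    have h2 : e.symm (L z) = z := by
      have h3 : L z = e z := rfl
      rw [h3, e.symm_apply_apply]
    have h1 : ‖z‖ ≤ M * ‖L z‖ := by
      calc ‖z‖ = ‖e.symm (L z)‖ := by rw [h2]
        _ ≤ ‖(e.symm : H →L[ℝ] H)‖ * ‖L z‖ := (e.symm : H →L[ℝ] H).le_opNorm _
        _ ≤ M * ‖L z‖ := by
            have := norm_nonneg (L z)
            nlinarith
    calc M⁻¹ * ‖z‖ ≤ M⁻¹ * (M * ‖L z‖) :=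
          mul_le_mul_of_nonneg_left h1 (by positivity)
      _ = ‖L z‖ := by field_simp
  -- choice of ε and N
  set ε : ℝ := min (c₀ / 4) (1 / 2) with hεdef
  have hεpos : 0 < ε := lt_min (by linarith) (by norm_num)
  have hε14 : ε ≤ c₀ / 4 := min_le_left _ _
  have hε12 : ε ≤ 1 / 2 := min_le_right _ _
  have harith : ∀ t : ℝ, 0 ≤ t → ε * (2 * ε * t) ≤ (c₀ / 2) / 2 * t := by
    intro t ht
    have f1 : (0:ℝ) ≤ (ε * (1 - 2 * ε)) * t :=
      mul_nonneg (mul_nonneg hεpos.le (by linarith)) ht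
    have f2 : (0:ℝ) ≤ (c₀ / 4 - ε) * t := mul_nonneg (by linarith) ht
    nlinarith [f1, f2]
  obtain ⟨N₁, hN₁⟩ := hKn ε hεpos
  refine ⟨max N₁ n₀, le_max_right _ _, fun n hn => ?_⟩
  have hn₀ : n₀ ≤ n := le_trans (le_max_right _ _) hn
  have hnN₁ : N₁ ≤ n := le_trans (le_max_left _ _) hn
  obtain ⟨hK1, hK2⟩ := hN₁ n hnN₁
  -- abbreviations
  set E := Hn n with hE
  set F := (Hn n)ᗮ with hF
  set P : H →L[ℝ] E := Submodule.orthogonalProjectionOnto E with hP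
  set Q : H →L[ℝ] F := Submodule.orthogonalProjectionOnto F with hQ
  set ι : E →L[ℝ] H := E.subtypeL with hι
  set κ : F →L[ℝ] H := F.subtypeL with hκ
  set Rn : H →L[ℝ] H := ι ∘L P with hRn
  set A : E →L[ℝ] E := P ∘L (L ∘L ι) with hA
  set Bop : F →L[ℝ] E := P ∘L (L ∘L κ) with hB
  set Cop : E →L[ℝ] F := Q ∘L (L ∘L ι) with hCop
  set D : F →L[ℝ] F := Q ∘L (L ∘L κ) with hD
  -- basic projection facts
  have hLapp : ∀ z : H, L z = J z + Kl z := fun z => rfl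
  have hRneq : ∀ z ∈ E, Rn z = z := fun z hz =>
    Submodule.starProjection_eq_self_iff.mpr hz
  have hPF : ∀ z ∈ F, P z = 0 := fun z hz =>
    Submodule.orthogonalProjectionOnto_apply_of_mem_orthogonal hz
  have hQE : ∀ z ∈ E, Q z = 0 := fun z hz =>
    Submodule.orthogonalProjectionOnto_apply_of_mem_orthogonal (E.le_orthogonal_orthogonal hz)
  have hQF : ∀ z ∈ F, (κ (Q z) : H) = z := fun z hz =>
    Submodule.starProjection_eq_self_iff.mpr hz
  have hnormP : ∀ z : H, ‖P z‖ ≤ ‖z‖ := by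
    intro z
    exact norm_proj_le' E z
  have hnormQ : ∀ z : H, ‖Q z‖ ≤ ‖z‖ := by
    intro z
    exact norm_proj_le' F z
  -- J preserves F
  have hJF : ∀ z ∈ F, J z ∈ F := by
    intro z hz
    rw [hF, Submodule.mem_orthogonal]
    intro u hu
    have h1 : (inner ℝ (J u) z : ℝ) = 0 :=
      (Submodule.mem_orthogonal E z).mp hz (J u) (hJHn n u hu)
    calc (inner ℝ u (J z) : ℝ) = inner ℝ (J z) u := real_inner_comm _ _
      _ = inner ℝ z (J u) := hJsym z u
      _ = inner ℝ (J u) z := real_inner_comm _ _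
      _ = 0 := h1
  -- operator estimates
  have hAlow : ∀ x : E, c₀ / 2 * ‖x‖ ≤ ‖A x‖ := by
    intro x
    have hJι : J (ι x) ∈ E := hJHn n (ι x) (SetLike.coe_mem x)
    have h1 : L (ι x) - Rn (L (ι x)) = Kl (ι x) - Rn (Kl (ι x)) := by
      rw [hLapp (ι x), map_add, hRneq _ hJι]
      abel
    have h2 : ‖L (ι x) - Rn (L (ι x))‖ ≤ ε * ‖x‖ := by
      rw [h1]
      have := hK1 (ι x)
      exact this
    have h3 : ‖Rn (L (ι x))‖ = ‖A x‖ := rfl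
    have h4 : c₀ * ‖x‖ ≤ ‖L (ι x)‖ := by
      have := hLlow (ι x)
      exact this
    have h5 : ‖L (ι x)‖ ≤ ‖A x‖ + ε * ‖x‖ := by
      calc ‖L (ι x)‖ = ‖Rn (L (ι x)) + (L (ι x) - Rn (L (ι x)))‖ := by rw [add_sub_cancel]
        _ ≤ ‖Rn (L (ι x))‖ + ‖L (ι x) - Rn (L (ι x))‖ := norm_add_le _ _
        _ ≤ ‖A x‖ + ε * ‖x‖ := by rw [h3]; exact (add_le_add_iff_left _).mpr h2
    have h6 : ε * ‖x‖ ≤ c₀ / 2 * ‖x‖ := by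
      apply mul_le_mul_of_nonneg_right _ (norm_nonneg x)
      linarith
    linarith
  have hKsmall : ∀ y : F, ‖Kl (κ y)‖ ≤ ε * ‖y‖ := by
    intro y
    have hPκ : Rn (κ y) = 0 := by
      show (ι (P (κ y)) : H) = 0
      rw [hPF (κ y) (SetLike.coe_mem y)]
      rfl
    have := hK2 (κ y)
    rw [hPκ] at this
    rw [sub_zero] at this; exact this
  have hDlow : ∀ y : F, 1 / 2 * ‖y‖ ≤ ‖D y‖ := by
    intro y
    have hJκ : J (κ y) ∈ F := hJF (κ y) (SetLike.coe_mem y)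
    have h1 : D y = Q (J (κ y)) + Q (Kl (κ y)) := by
      show Q (L (κ y)) = _
      rw [hLapp (κ y), map_add]
    have h2 : ‖Q (J (κ y))‖ = ‖y‖ := by
      have e2 : ‖Q (J (κ y))‖ = ‖(κ (Q (J (κ y))) : H)‖ := rfl
      rw [e2, hQF _ hJκ, hJnorm]
      rfl
    have h3 : ‖Q (Kl (κ y))‖ ≤ ε * ‖y‖ := le_trans (hnormQ _) (hKsmall y)
    have h4 : ‖Q (J (κ y))‖ ≤ ‖D y‖ + ‖Q (Kl (κ y))‖ := by
      have e1 : Q (J (κ y)) = (Q (J (κ y)) + Q (Kl (κ y))) - Q (Kl (κ y)) := by abel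
      calc ‖Q (J (κ y))‖ = ‖(Q (J (κ y)) + Q (Kl (κ y))) - Q (Kl (κ y))‖ := by rw [← e1]
        _ ≤ ‖Q (J (κ y)) + Q (Kl (κ y))‖ + ‖Q (Kl (κ y))‖ := norm_sub_le _ _
        _ = ‖D y‖ + ‖Q (Kl (κ y))‖ := by rw [h1]
    have h5 : ε * ‖y‖ ≤ 1 / 2 * ‖y‖ := by
      apply mul_le_mul_of_nonneg_right _ (norm_nonneg y)
      linarith
    rw [h2] at h4
    linarith
  have hBsmall : ∀ y : F, ‖Bop y‖ ≤ ε * ‖y‖ := by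
    intro y
    have hJκ : J (κ y) ∈ F := hJF (κ y) (SetLike.coe_mem y)
    have h1 : Bop y = P (J (κ y)) + P (Kl (κ y)) := by
      show P (L (κ y)) = _
      rw [hLapp (κ y), map_add]
    rw [h1, hPF _ hJκ, zero_add]
    exact le_trans (hnormP _) (hKsmall y)
  have hCsmall : ∀ x : E, ‖Cop x‖ ≤ ε * ‖x‖ := by
    intro x
    have hJι : J (ι x) ∈ E := hJHn n (ι x) (SetLike.coe_mem x)
    have h1 : Cop x = Q (J (ι x)) + Q (Kl (ι x)) := by
      show Q (L (ι x)) = _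
      rw [hLapp (ι x), map_add]
    rw [h1, hQE _ hJι, zero_add]
    have h2 : Q (Kl (ι x)) = Q (Kl (ι x) - Rn (Kl (ι x))) := by
      rw [map_sub, hQE (Rn (Kl (ι x))) (SetLike.coe_mem _), sub_zero]
    rw [h2]
    calc ‖Q (Kl (ι x) - Rn (Kl (ι x)))‖ ≤ ‖Kl (ι x) - Rn (Kl (ι x))‖ := hnormQ _
      _ ≤ ε * ‖ι x‖ := hK1 (ι x)
      _ = ε * ‖x‖ := rfl
  -- A is symmetric
  have hAsym : ∀ x y : E, (inner ℝ (A x) y : ℝ) = inner ℝ x (A y) := by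
    intro x y
    have h1 : (inner ℝ (A x) y : ℝ) = inner ℝ (L (ι x)) (ι y : H) := by
      show (inner ℝ (P (L (ι x))) y : ℝ) = _
      exact Submodule.inner_orthogonalProjectionOnto_eq_of_mem_right (K := E) y (L (ι x))
    have h2 : (inner ℝ x (A y) : ℝ) = inner ℝ (ι x : H) (L (ι y)) := by
      show (inner ℝ x (P (L (ι y))) : ℝ) = _
      rw [real_inner_comm (P (L (ι y))) x,
        Submodule.inner_orthogonalProjectionOnto_eq_of_mem_right (K := E) x (L (ι y))]
      exact real_inner_comm _ _
    rw [h1, h2, hLsym]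
  -- the calculus step
  have hδn := hδ n hn₀
  have hgdiff : ∀ x ∈ ball (0 : E) (δ n), DifferentiableAt ℝ (g n) x := fun x hx =>
    ((hgC1 n hn₀).differentiableOn one_ne_zero).differentiableAt (isOpen_ball.mem_nhds hx)
  have hhd : ∀ x ∈ ball (0 : E) (δ n),
      HasFDerivAt (fun x' : E => (x' : H) + (g n x' : H))
        (ι + κ ∘L (fderiv ℝ (g n) x)) x := by
    intro x hx
    have h1 : HasFDerivAt (fun x' : E => (x' : H)) ι x := ι.hasFDerivAt
    have h2 : HasFDerivAt (fun x' : E => (g n x' : H)) (κ ∘L (fderiv ℝ (g n) x)) x :=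
      κ.hasFDerivAt.comp x (hgdiff x hx).hasFDerivAt
    exact h1.add h2
  have hψdiff : ∀ u ∈ U, DifferentiableAt ℝ ψl u := fun u hu =>
    (hC2.contDiffAt (hUopen.mem_nhds hu)).differentiableAt two_ne_zero
  have hgradPsi : ∀ (w : H) (z : H), (inner ℝ (gradient ψl w) z : ℝ) = fderiv ℝ ψl w z := by
    intro w z
    rw [gradient, InnerProductSpace.toDual_symm_apply]
  have hgrad : ∀ x ∈ ball (0 : E) (δ n),
      HasGradientAt (fun x' : E => ψl ((x' : H) + (g n x' : H)))
        (P (gradient ψl ((x : H) + (g n x : H)))) x := by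
    intro x hx
    obtain ⟨hxU, hxQ⟩ := hgsol n hn₀ x hx
    have hψ : HasFDerivAt ψl (fderiv ℝ ψl ((x : H) + (g n x : H))) ((x : H) + (g n x : H)) :=
      (hψdiff _ hxU).hasFDerivAt
    have hcomp : HasFDerivAt (fun x' : E => ψl ((x' : H) + (g n x' : H)))
        ((fderiv ℝ ψl ((x : H) + (g n x : H))).comp (ι + κ ∘L (fderiv ℝ (g n) x))) x :=
      hψ.comp x (hhd x hx)
    rw [hasGradientAt_iff_hasFDerivAt]
    have heq : (InnerProductSpace.toDual ℝ E) (P (gradient ψl ((x : H) + (g n x : H))))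
        = (fderiv ℝ ψl ((x : H) + (g n x : H))).comp (ι + κ ∘L (fderiv ℝ (g n) x)) := by
      apply ContinuousLinearMap.ext
      intro v
      set w : H := gradient ψl ((x : H) + (g n x : H)) with hw
      have hlhs : (InnerProductSpace.toDual ℝ E) (P w) v = (inner ℝ (P w) v : ℝ) :=
        InnerProductSpace.toDual_apply_apply
      have hrhs : ((fderiv ℝ ψl ((x : H) + (g n x : H))).comp
          (ι + κ ∘L (fderiv ℝ (g n) x))) v
          = fderiv ℝ ψl ((x : H) + (g n x : H)) (ι v + κ ((fderiv ℝ (g n) x) v)) := rfl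
      rw [hlhs, hrhs, ← hgradPsi, ← hw]
      have h1 : (inner ℝ w (ι v + κ ((fderiv ℝ (g n) x) v)) : ℝ)
          = inner ℝ w (ι v : H) + inner ℝ w (κ ((fderiv ℝ (g n) x) v) : H) := inner_add_right _ _ _
      have h2 : (inner ℝ w (κ ((fderiv ℝ (g n) x) v) : H) : ℝ)
          = inner ℝ (Q w) ((fderiv ℝ (g n) x) v) := by
        exact (Submodule.inner_orthogonalProjectionOnto_eq_of_mem_right (K := F) ((fderiv ℝ (g n) x) v) w).symm
      have h3 : (inner ℝ (P w) v : ℝ) = inner ℝ w (ι v : H) := by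
        exact Submodule.inner_orthogonalProjectionOnto_eq_of_mem_right (K := E) v w
      rw [h1, h2, hxQ, h3]
      simp
    rw [heq]
    exact hcomp
  -- the gradient map agrees with x ↦ P (∇ψl (h x)) near 0
  have hball : ball (0 : E) (δ n) ∈ nhds (0 : E) := isOpen_ball.mem_nhds (mem_ball_self hδn)
  have hgradeq : (fun x : E => gradient (fun x' : E => ψl ((x' : H) + (g n x' : H))) x)
      =ᶠ[nhds (0 : E)] fun x : E => P (gradient ψl ((x : H) + (g n x : H))) := by
    filter_upwards [hball] with x hx
    exact (hgrad x hx).gradient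
  -- derivative of the right-hand side at 0
  have hg00 : (g n 0 : H) = 0 := by rw [hg0 n hn₀]; rfl
  have h00 : ((0 : E) : H) + (g n 0 : H) = 0 := by rw [hg00]; simp
  set G₀ : E →L[ℝ] F := fderiv ℝ (g n) 0 with hG₀
  have hh0 : HasFDerivAt (fun x' : E => (x' : H) + (g n x' : H)) (ι + κ ∘L G₀) 0 :=
    hhd 0 (mem_ball_self hδn)
  have hHess0 : HasFDerivAt (fun y : H => gradient ψl y) L (((0 : E) : H) + (g n 0 : H)) := by
    rw [h00]; exact hHess
  have hFh : HasFDerivAt (fun x : E => gradient ψl ((x : H) + (g n x : H)))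
      (L ∘L (ι + κ ∘L G₀)) 0 := hHess0.comp (f := fun x' : E => (x' : H) + (g n x' : H)) 0 hh0
  have hPFh : HasFDerivAt (fun x : E => P (gradient ψl ((x : H) + (g n x : H))))
      (P ∘L (L ∘L (ι + κ ∘L G₀))) 0 := P.hasFDerivAt.comp 0 hFh
  have hfderiv : fderiv ℝ (fun x : Hn n =>
      gradient (fun x' : Hn n => ψl ((x' : H) + (g n x' : H))) x) 0
      = P ∘L (L ∘L (ι + κ ∘L G₀)) := by
    rw [hgradeq.fderiv_eq]
    exact hPFh.fderiv
  -- the implicit equation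
  have hQFh : HasFDerivAt (fun x : E => Q (gradient ψl ((x : H) + (g n x : H))))
      (Q ∘L (L ∘L (ι + κ ∘L G₀))) 0 := Q.hasFDerivAt.comp 0 hFh
  have hQzero : (fun x : E => Q (gradient ψl ((x : H) + (g n x : H))))
      =ᶠ[nhds (0 : E)] fun _ => (0 : F) := by
    filter_upwards [hball] with x hx
    exact (hgsol n hn₀ x hx).2
  have hQderiv : Q ∘L (L ∘L (ι + κ ∘L G₀)) = 0 := by
    have h1 := hQFh.fderiv
    rw [hQzero.fderiv_eq] at h1
    rw [← h1]
    exact fderiv_const_apply _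
  have hDG : ∀ x : E, D (G₀ x) = - Cop x := by
    intro x
    have h1 : Q (L (ι x + κ (G₀ x))) = 0 := by
      have := congrArg (fun (T : E →L[ℝ] F) => T x) hQderiv
      simpa using this
    have h2 : Q (L (ι x + κ (G₀ x))) = Cop x + D (G₀ x) := by
      show Q (L (ι x + κ (G₀ x))) = Q (L (ι x)) + Q (L (κ (G₀ x)))
      rw [map_add, map_add]
    rw [h2] at h1
    exact eq_neg_of_add_eq_zero_right h1
  have hG₀bound : ∀ x : E, ‖G₀ x‖ ≤ 2 * ε * ‖x‖ := by
    intro x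
    have h1 := hDlow (G₀ x)
    rw [hDG x, norm_neg] at h1
    have h2 := hCsmall x
    linarith
  -- assembling
  have hlneq : ∀ x : E, (fderiv ℝ (fun x : Hn n =>
      gradient (fun x' : Hn n => ψl ((x' : H) + (g n x' : H))) x) 0) x
      = A x + Bop (G₀ x) := by
    intro x
    rw [hfderiv]
    show P (L (ι x + κ (G₀ x))) = P (L (ι x)) + P (L (κ (G₀ x)))
    rw [map_add, map_add]
  have hnear : ∀ x : E, ‖(fderiv ℝ (fun x : Hn n =>
      gradient (fun x' : Hn n => ψl ((x' : H) + (g n x' : H))) x) 0) x - A x‖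
      ≤ (c₀ / 2) / 2 * ‖x‖ := by
    intro x
    have h1 : (fderiv ℝ (fun x : Hn n =>
      gradient (fun x' : Hn n => ψl ((x' : H) + (g n x' : H))) x) 0) x - A x
      = Bop (G₀ x) := by rw [hlneq x]; abel
    rw [h1]
    calc ‖Bop (G₀ x)‖ ≤ ε * ‖G₀ x‖ := hBsmall _
      _ ≤ ε * (2 * ε * ‖x‖) :=
          mul_le_mul_of_nonneg_left (hG₀bound x) hεpos.le
      _ ≤ (c₀ / 2) / 2 * ‖x‖ := harith ‖x‖ (norm_nonneg x)
  have := morse_stability A (fderiv ℝ (fun x : Hn n =>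
      gradient (fun x' : Hn n => ψl ((x' : H) + (g n x' : H))) x) 0)
    hAsym (c₀ / 2) (by linarith) hAlow hnear
  exact ⟨this.1, this.2⟩

end AuxHilbert

/-- **Morse indices of the finite-dimensional reductions.**
Let `H = H⁺ ⊕ H⁻` (here `H⁺ = V`, `H⁻ = Vᗮ`, both infinite-dimensional), `J = Id ⊕ (−Id)`,
`{e_k^±}` orthonormal bases of `H^±`, `H_n` the span of the first `n` vectors of each basis,
and `P_n` the orthogonal projection onto `H_n`.  Let `ψ` be a continuous family of `C²`
functionals with `∇ψ_λ(0) = 0` and Hessians `L_λ = J + K_λ` at `0`, `K_λ` compact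
self-adjoint, `L_a, L_b` invertible.  Suppose that for `n ≥ n₀` the operator
`(Id − P_n)L_λ|_{H_nᗮ}` is invertible for all `λ ∈ [a,b]`, the operators
`L^n_i = P_n L_i|_{H_n}` are invertible for `i ∈ {a,b}`, and let `ψ̄ⁿ` be the
Lyapunov–Schmidt reduction of `ψ` with respect to `H = H_n ⊕ H_nᗮ`, with Hessian `lⁿ_i`
of `ψ̄ⁿ_i` at `0`.  Then for all sufficiently large `n` and `i ∈ {a,b}`, `0` is a
non-degenerate critical point of `ψ̄ⁿ_i` (i.e. `lⁿ_i` is invertible) and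
`μ(lⁿ_i) = μ(Lⁿ_i)`. -/
theorem morse_index_of_reduction
    {H : Type*} [NormedAddCommGroup H] [InnerProductSpace ℝ H] [CompleteSpace H]
    [TopologicalSpace.SeparableSpace H]
    -- the polarization `H = H⁺ ⊕ H⁻`, both factors infinite-dimensional:
    (V : Submodule ℝ H) (hVclosed : IsClosed (V : Set H))
    (hVinf : ¬ FiniteDimensional ℝ V) (hVcinf : ¬ FiniteDimensional ℝ Vᗮ)
    -- orthonormal bases `{e_k^+}` of `H⁺` and `{e_k^-}` of `H⁻`:
    (ep em : ℕ → H)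
    (hep : Orthonormal ℝ ep) (hem : Orthonormal ℝ em)
    (hepV : ∀ k, ep k ∈ V) (hemV : ∀ k, em k ∈ Vᗮ)
    (hepdense : (Submodule.span ℝ (Set.range ep)).topologicalClosure = V)
    (hemdense : (Submodule.span ℝ (Set.range em)).topologicalClosure = Vᗮ)
    -- `J` is the self-adjoint involution equal to `Id` on `H⁺` and `−Id` on `H⁻`:
    (J : H →L[ℝ] H) (hJp : ∀ x ∈ V, J x = x) (hJm : ∀ x ∈ Vᗮ, J x = -x)
    -- `H_n` is the span of `{e_k^± : k < n}`:
    (Hn : ℕ → Submodule ℝ H)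
    (hHn : ∀ n, Hn n = Submodule.span ℝ (ep '' {k | k < n} ∪ em '' {k | k < n}))
    [∀ n, FiniteDimensional ℝ (Hn n)]
    -- the family `ψ`, a continuous family of `C²` functionals on `I × U`:
    (U : Set H) (hUopen : IsOpen U) (hU0 : (0 : H) ∈ U)
    (a b : ℝ) (hab : a ≤ b)
    (ψ : ℝ → H → ℝ)
    (hψC2 : ∀ l ∈ Icc a b, ContDiffOn ℝ 2 (ψ l) U)
    (hψcont : ContinuousOn (fun p : ℝ × H => ψ p.1 p.2) (Icc a b ×ˢ U))
    (hψd1 : ContinuousOn (fun p : ℝ × H => fderiv ℝ (ψ p.1) p.2) (Icc a b ×ˢ U))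
    (hψd2 : ContinuousOn (fun p : ℝ × H => fderiv ℝ (fderiv ℝ (ψ p.1)) p.2) (Icc a b ×ˢ U))
    (hcrit : ∀ l ∈ Icc a b, gradient (ψ l) 0 = 0)
    -- the Hessians at `0` are `L_λ = J + K_λ` with `K_λ` compact self-adjoint:
    (K : ℝ → H →L[ℝ] H)
    (hKcompact : ∀ l ∈ Icc a b, IsCompactOperator (K l))
    (hKsa : ∀ l ∈ Icc a b, IsSelfAdjoint (K l))
    (hKcont : ContinuousOn K (Icc a b))
    (hHess : ∀ l ∈ Icc a b, HasFDerivAt (fun x => gradient (ψ l) x) (J + K l) 0)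
    -- `L_a` and `L_b` are invertible:
    (hLa : Function.Bijective (J + K a)) (hLb : Function.Bijective (J + K b))
    -- choice of `n₀`:
    (n₀ : ℕ)
    (hn₀inv : ∀ n, n₀ ≤ n → ∀ l ∈ Icc a b, Function.Bijective
      ((Submodule.orthogonalProjectionOnto (Hn n)ᗮ).comp ((J + K l).comp (Hn n)ᗮ.subtypeL)))
    (hn₀end : ∀ n, n₀ ≤ n → ∀ i ∈ ({a, b} : Set ℝ), Function.Bijective
      ((Submodule.orthogonalProjectionOnto (Hn n)).comp ((J + K i).comp (Hn n).subtypeL)))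
    -- the Lyapunov–Schmidt reduction `ψ̄ⁿ(λ,x) = ψ(λ, x + gₙ(λ,x))` of `ψ` with respect
    -- to the splitting `H = H_n ⊕ H_nᗮ`, defined on `I × B(0,δ n)`:
    (δ : ℕ → ℝ) (hδ : ∀ n, n₀ ≤ n → 0 < δ n)
    (g : (n : ℕ) → ℝ → Hn n → ((Hn n)ᗮ : Submodule ℝ H))
    (hgcont : ∀ n, n₀ ≤ n → ContinuousOn (fun p : ℝ × Hn n => g n p.1 p.2)
      (Icc a b ×ˢ ball 0 (δ n)))
    (hg0 : ∀ n, n₀ ≤ n → ∀ l ∈ Icc a b, g n l 0 = 0)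
    (hgsol : ∀ n, n₀ ≤ n → ∀ l ∈ Icc a b, ∀ x ∈ ball (0 : Hn n) (δ n),
      ((x : H) + (g n l x : H)) ∈ U ∧
      Submodule.orthogonalProjectionOnto (Hn n)ᗮ (gradient (ψ l) ((x : H) + (g n l x : H))) = 0)
    (hgC1 : ∀ n, n₀ ≤ n → ∀ l ∈ Icc a b, ContDiffOn ℝ 1 (g n l) (ball 0 (δ n))) :
    -- conclusion: for sufficiently large `n`, `0` is a non-degenerate critical point of
    -- `ψ̄ⁿ_i` and `μ(lⁿ_i) = μ(Lⁿ_i)`, `i ∈ {a, b}`: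
    ∃ N : ℕ, n₀ ≤ N ∧ ∀ n, N ≤ n → ∀ i ∈ ({a, b} : Set ℝ),
      Function.Bijective
        (fderiv ℝ (fun x : Hn n =>
          gradient (fun x' : Hn n => ψ i ((x' : H) + (g n i x' : H))) x) 0) ∧
      morseIndex
        (fderiv ℝ (fun x : Hn n =>
          gradient (fun x' : Hn n => ψ i ((x' : H) + (g n i x' : H))) x) 0)
      = morseIndex
        ((Submodule.orthogonalProjectionOnto (Hn n)).comp ((J + K i).comp (Hn n).subtypeL)) := by
  classical
  haveI : CompleteSpace V := hVclosed.completeSpace_coe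
  have haI : a ∈ Icc a b := ⟨le_refl a, hab⟩
  have hbI : b ∈ Icc a b := ⟨hab, le_refl b⟩
  -- decomposition of H
  have hdecomp : ∀ x : H, ∃ v w, v ∈ V ∧ w ∈ Vᗮ ∧ x = v + w := by
    intro x
    refine ⟨Submodule.orthogonalProjectionOnto V x, x - Submodule.orthogonalProjectionOnto V x, SetLike.coe_mem _,
      Submodule.sub_starProjection_mem_orthogonal x, by abel⟩
  -- J is symmetric
  have hJsym : ∀ x y : H, (inner ℝ (J x) y : ℝ) = inner ℝ x (J y) := by
    intro x y
    obtain ⟨v, w, hv, hw, rfl⟩ := hdecomp x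
    obtain ⟨v', w', hv', hw', rfl⟩ := hdecomp y
    have hJx : J (v + w) = v - w := by
      rw [map_add, hJp v hv, hJm w hw, sub_eq_add_neg]
    have hJy : J (v' + w') = v' - w' := by
      rw [map_add, hJp v' hv', hJm w' hw', sub_eq_add_neg]
    have c1 : (inner ℝ v w' : ℝ) = 0 := Submodule.inner_right_of_mem_orthogonal hv hw'
    have c2 : (inner ℝ w v' : ℝ) = 0 := by
      rw [real_inner_comm]; exact Submodule.inner_right_of_mem_orthogonal hv' hw
    have c3 : (inner ℝ v' w : ℝ) = 0 := Submodule.inner_right_of_mem_orthogonal hv' hw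
    have c4 : (inner ℝ w' v : ℝ) = 0 := by
      rw [real_inner_comm]; exact Submodule.inner_right_of_mem_orthogonal hv hw'
    rw [hJx, hJy]
    simp only [inner_sub_left, inner_add_left, inner_add_right, inner_sub_right]
    rw [c1, c2]
    ring
  -- J is an involution
  have hJJ : ∀ x : H, J (J x) = x := by
    intro x
    obtain ⟨v, w, hv, hw, rfl⟩ := hdecomp x
    have hJx : J (v + w) = v - w := by
      rw [map_add, hJp v hv, hJm w hw, sub_eq_add_neg]
    rw [hJx, map_sub, hJp v hv, hJm w hw]
    abel
  -- J preserves Hn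
  have hJHn : ∀ n, ∀ x ∈ Hn n, J x ∈ Hn n := by
    intro n x hx
    rw [hHn n] at hx ⊢
    induction hx using Submodule.span_induction with
    | mem z hz =>
        rcases hz with hz | hz
        · obtain ⟨k, hk, rfl⟩ := hz
          rw [hJp _ (hepV k)]
          exact Submodule.subset_span (Set.mem_union_left _ ⟨k, hk, rfl⟩)
        · obtain ⟨k, hk, rfl⟩ := hz
          rw [hJm _ (hemV k)]
          exact Submodule.neg_mem _
            (Submodule.subset_span (Set.mem_union_right _ ⟨k, hk, rfl⟩))
    | zero => rw [map_zero]; exact Submodule.zero_mem _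
    | add y z _ _ hy hz => rw [map_add]; exact Submodule.add_mem _ hy hz
    | smul c y _ hy => rw [map_smul]; exact Submodule.smul_mem _ c hy
  -- smallness of the compact operators
  have hR1 : ∀ n (z : H), ‖z - ((Hn n).subtypeL ∘L Submodule.orthogonalProjectionOnto (Hn n)) z‖ ≤ ‖z‖ := by
    intro n z
    have := norm_sub_proj_le (Hn n) z 0 (Submodule.zero_mem _)
    simpa using this
  have hR2 := proj_strong_conv V hVclosed ep em hepdense hemdense Hn hHn
  have hKn : ∀ i ∈ Icc a b, ∀ ε > (0:ℝ), ∃ N, ∀ n ≥ N, (∀ z : H,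
      ‖K i z - ((Hn n).subtypeL ∘L Submodule.orthogonalProjectionOnto (Hn n)) (K i z)‖ ≤ ε * ‖z‖) ∧
      (∀ z : H, ‖K i (z - ((Hn n).subtypeL ∘L Submodule.orthogonalProjectionOnto (Hn n)) z)‖ ≤ ε * ‖z‖) := by
    intro i hi ε hε
    obtain ⟨N, hN⟩ := compact_proj_norm (K i) (hKcompact i hi)
      (fun n => (Hn n).subtypeL ∘L Submodule.orthogonalProjectionOnto (Hn n)) hR1 hR2 ε hε
    refine ⟨N, fun n hn => ⟨hN n hn, ?_⟩⟩
    exact compact_proj_norm' (K i) (hKsa i hi) (Hn n) ε hε.le (hN n hn)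
  -- apply the key lemma at a and b
  obtain ⟨Na, hNa₀, hNa⟩ := key_reduction J hJsym hJJ Hn hJHn U hUopen (ψ a)
    (hψC2 a haI) (K a) (hKsa a haI) (hHess a haI) hLa n₀ δ hδ (fun n => g n a)
    (fun n hn => hg0 n hn a haI) (fun n hn => hgsol n hn a haI)
    (fun n hn => hgC1 n hn a haI) (hKn a haI)
  obtain ⟨Nb, hNb₀, hNb⟩ := key_reduction J hJsym hJJ Hn hJHn U hUopen (ψ b)
    (hψC2 b hbI) (K b) (hKsa b hbI) (hHess b hbI) hLb n₀ δ hδ (fun n => g n b)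
    (fun n hn => hg0 n hn b hbI) (fun n hn => hgsol n hn b hbI)
    (fun n hn => hgC1 n hn b hbI) (hKn b hbI)
  refine ⟨max Na Nb, le_trans hNa₀ (le_max_left _ _), fun n hn i hi => ?_⟩
  rcases hi with rfl | hi
  · exact hNa n (le_trans (le_max_left _ _) hn)
  · rw [Set.mem_singleton_iff] at hi
    subst hi
    exact hNb n (le_trans (le_max_right _ _) hn)
end
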